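/- arXiv:1401.7910 — 2 statements merged into one kernel-verified Lean document; each statement's English description precedes it below -/
import Mathlib

section
/- (Main Theorem.) Let 𝒜 be a finite nonempty set, let V = ℤ^d, and let μ be a translation invariant probability measure on 𝒜^V. Let (A, G) be a tiling of V, and partition A into N nonempty sets A_1, …, A_N (1 ≤ N ≤ |A|); set A_{<k} = ∪_{i=1}^{k−1} A_i. Then the entropy density s_μ = lim_{n→∞} S(V_n)/|V_n| (with V_n = {v ∈ ℤ^d : |v_i| ≤ n for all i}) exists and equals s_μ = (1/|A|) Σ_{k=1}^N S( A_k | (A_k + G^−) ∪ (A_{<k} + G) ), where each conditional entropy with infinite conditioning set Λ' is defined as lim_{n→∞} S(A_k | Λ' ∩ V_n). -/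
open MeasureTheory Real Filter Pointwise

/-- The lattice `ℤ^d`. -/
abbrev LatZ (d : ℕ) := Fin d → ℤ

/-- Probability of the cylinder set determined by the configuration `x` on the finite set `Λ`. -/
noncomputable def cylProb {d : ℕ} {𝒜 : Type*} [MeasurableSpace 𝒜]
    (μ : Measure (LatZ d → 𝒜)) (Λ : Finset (LatZ d)) (x : Λ → 𝒜) : ℝ :=
  (μ {ω | ∀ v : Λ, ω v.1 = x v}).toReal

/-- The entropy `S(Λ)` of a finite set of sites `Λ` with respect to `μ`. -/
noncomputable def entS {d : ℕ} {𝒜 : Type*} [Fintype 𝒜] [MeasurableSpace 𝒜]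
    (μ : Measure (LatZ d → 𝒜)) (Λ : Finset (LatZ d)) : ℝ :=
  -∑ x : (Λ → 𝒜), cylProb μ Λ x * Real.log (cylProb μ Λ x)

/-- The conditional entropy `S(Λ | Λ')` (terms with zero probability vanish since
`Real.log 0 = 0` and `0 * log 0 = 0`). -/
noncomputable def condEnt {d : ℕ} {𝒜 : Type*} [Fintype 𝒜] [MeasurableSpace 𝒜]
    (μ : Measure (LatZ d → 𝒜)) (Λ Λ' : Finset (LatZ d)) : ℝ :=
  -∑ x : ((Λ ∪ Λ' : Finset (LatZ d)) → 𝒜),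
      cylProb μ (Λ ∪ Λ') x *
        Real.log (cylProb μ (Λ ∪ Λ') x /
          cylProb μ Λ' (fun v => x ⟨v.1, Finset.mem_union_right Λ v.2⟩))

/-- The shift map `σ_v`, `(σ_v x)(u) = x(u + v)`. -/
def shiftMap {d : ℕ} {𝒜 : Type*} (v : LatZ d) (ω : LatZ d → 𝒜) : LatZ d → 𝒜 :=
  fun u => ω (u + v)

/-- `μ` is translation invariant if it is preserved by every shift `σ_v`. -/
def TransInv {d : ℕ} {𝒜 : Type*} [MeasurableSpace 𝒜] (μ : Measure (LatZ d → 𝒜)) : Prop :=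
  ∀ v : LatZ d, μ.map (shiftMap v) = μ

/-- The box `V_n = {v ∈ ℤ^d : |v_i| ≤ n ∀ i}` (also used as coordinate box `G_n`). -/
noncomputable def Vbox (d n : ℕ) : Finset (LatZ d) :=
  Fintype.piFinset fun _ => Finset.Icc (-(n : ℤ)) (n : ℤ)

open Classical in
/-- The finite set `Λ' ∩ V_n` for a (possibly infinite) `Λ' ⊆ ℤ^d`. -/
noncomputable def interBox (d : ℕ) (Λ' : Set (LatZ d)) (n : ℕ) : Finset (LatZ d) :=
  (Vbox d n).filter (· ∈ Λ')

/-- The lattice point `Σ_i c_i ê_i` with coordinates `c` in the basis `e`. -/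
def latt {d : ℕ} (e : Fin d → LatZ d) (c : Fin d → ℤ) : LatZ d :=
  ∑ i, c i • e i

/-- Lexicographic comparison of coordinate vectors. -/
def lexLt {d : ℕ} (c c' : Fin d → ℤ) : Prop :=
  ∃ i, c i < c' i ∧ ∀ j, j < i → c j = c' j

/-- The subgroup `G` generated by `e`, as a set. -/
def Gfull {d : ℕ} (e : Fin d → LatZ d) : Set (LatZ d) :=
  Set.range (latt e)

/-- `G^- = {g ∈ G : g < 0}` in the lexicographic order on `G`. -/
def Gneg {d : ℕ} (e : Fin d → LatZ d) : Set (LatZ d) :=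
  {g | ∃ c, lexLt c 0 ∧ g = latt e c}

/-- The finite subset `G_n = {Σ g_i ê_i : |g_i| ≤ n}` of `G`. -/
noncomputable def GboxF {d : ℕ} (e : Fin d → LatZ d) (n : ℕ) : Finset (LatZ d) :=
  (Vbox d n).image (latt e)

/-- A tiling `(A, G)` of `ℤ^d`, with `G` the subgroup generated by the
`ℤ`-linearly independent family `e`. -/
structure IsTiling {d : ℕ} (A : Finset (LatZ d)) (e : Fin d → LatZ d) : Prop where
  zero_mem : (0 : LatZ d) ∈ A
  indep : LinearIndependent ℤ e
  cover : ∀ v : LatZ d, ∃ a ∈ A, ∃ c : Fin d → ℤ, v = a + latt e c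
  disj : ∀ c c' : Fin d → ℤ, latt e c ≠ latt e c' →
    Disjoint (A.image (· + latt e c)) (A.image (· + latt e c'))

/-- The unit cube `U_d`. -/
noncomputable def Ud (d : ℕ) : Finset (LatZ d) :=
  Fintype.piFinset fun _ => Finset.Icc (-1 : ℤ) 1

open Classical in
/-- The boundary `∂Λ = Λ ∩ (U_d + Λ^C)`. -/
noncomputable def bdry {d : ℕ} (Λ : Finset (LatZ d)) : Finset (LatZ d) :=
  Λ.filter (fun v => v ∈ (↑(Ud d) : Set (LatZ d)) + (↑Λ : Set (LatZ d))ᶜ)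



set_option linter.unusedSectionVars false

namespace EntAux

open Finset

variable {γ : Type*} [Fintype γ] {α : Type*} [Fintype α] [DecidableEq α]

noncomputable def mar (f : γ → α) (P : γ → ℝ) : α → ℝ :=
  fun s => ∑ x, if f x = s then P x else 0

noncomputable def H {γ : Type*} [Fintype γ] (P : γ → ℝ) : ℝ :=
  -∑ x, P x * Real.log (P x)

lemma mar_nonneg (f : γ → α) (P : γ → ℝ) (hP : ∀ x, 0 ≤ P x) (s : α) :
    0 ≤ mar f P s :=
  Finset.sum_nonneg fun x _ => by split <;> simp [hP x]

lemma sum_mar (f : γ → α) (P : γ → ℝ) : ∑ s, mar f P s = ∑ x, P x := by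
  unfold mar; rw [Finset.sum_comm]
  simp [Finset.sum_ite_eq]

lemma le_mar (f : γ → α) (P : γ → ℝ) (hP : ∀ x, 0 ≤ P x) (x : γ) :
    P x ≤ mar f P (f x) := by
  have := Finset.single_le_sum (f := fun y => if f y = f x then P y else 0)
    (fun y _ => by by_cases h : f y = f x <;> simp [h, hP y]) (Finset.mem_univ x)
  simpa [mar] using this

lemma sum_comp (f : γ → α) (P : γ → ℝ) (F : α → ℝ) :
    ∑ x, P x * F (f x) = ∑ s, mar f P s * F s := by
  simp only [mar, Finset.sum_mul, ite_mul, zero_mul]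
  rw [Finset.sum_comm]
  simp [Finset.sum_ite_eq]

lemma mar_comp {χ : Type*} [Fintype χ] [DecidableEq χ] (f : γ → α) (g : α → χ) (P : γ → ℝ) :
    mar g (mar f P) = mar (fun x => g (f x)) P := by
  funext s
  unfold mar
  have h1 : ∀ x : α, (if g x = s then ∑ y, if f y = x then P y else 0 else 0)
      = ∑ y, if f y = x then (if g x = s then P y else 0) else 0 := by
    intro x; split <;> simp
  rw [Finset.sum_congr rfl fun x _ => h1 x, Finset.sum_comm]
  refine Finset.sum_congr rfl fun y _ => ?_
  have h2 : ∀ x : α, (if f y = x then (if g x = s then P y else 0) else 0)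
      = (if f y = x then (if g (f y) = s then P y else 0) else 0) := by
    intro x; by_cases h : f y = x
    · subst h; rfl
    · simp [h]
  rw [Finset.sum_congr rfl fun x _ => h2 x,
    Finset.sum_ite_eq univ (f y) (fun _ => if g (f y) = s then P y else 0)]
  simp

lemma gibbs2 (P R : γ → ℝ) (hP : ∀ x, 0 ≤ P x) (hR : ∀ x, 0 ≤ R x)
    (hRP : ∀ x, R x = 0 → P x = 0) (hsum : ∑ x, R x ≤ ∑ x, P x) :
    ∑ x, P x * Real.log (R x) ≤ ∑ x, P x * Real.log (P x) := by
  have key : ∀ x, P x * Real.log (R x) - P x * Real.log (P x) ≤ R x - P x := by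
    intro x
    rcases eq_or_lt_of_le (hP x) with h0 | hpos
    · simp [← h0, hR x]
    · have hRpos : 0 < R x := by
        rcases eq_or_lt_of_le (hR x) with h0' | h'
        · exact absurd (hRP x h0'.symm) (by linarith)
        · exact h'
      have hlog := Real.log_le_sub_one_of_pos (div_pos hRpos hpos)
      rw [Real.log_div (ne_of_gt hRpos) (ne_of_gt hpos)] at hlog
      calc P x * Real.log (R x) - P x * Real.log (P x)
          = P x * (Real.log (R x) - Real.log (P x)) := by ring
        _ ≤ P x * (R x / P x - 1) := mul_le_mul_of_nonneg_left hlog (le_of_lt hpos)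
        _ = R x - P x := by field_simp
  have hs : ∑ x, (P x * Real.log (R x) - P x * Real.log (P x)) ≤ ∑ x, (R x - P x) :=
    Finset.sum_le_sum fun x _ => key x
  rw [Finset.sum_sub_distrib, Finset.sum_sub_distrib] at hs
  linarith

lemma chainD (f : γ → α) (P : γ → ℝ) (hP : ∀ x, 0 ≤ P x) :
    ∑ x, P x * Real.log (P x / mar f P (f x)) =
      ∑ x, P x * Real.log (P x) - ∑ s, mar f P s * Real.log (mar f P s) := by
  rw [← sum_comp f P (fun s => Real.log (mar f P s)), ← Finset.sum_sub_distrib]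
  refine Finset.sum_congr rfl fun x _ => ?_
  rcases eq_or_lt_of_le (hP x) with h0 | hpos
  · simp [← h0]
  · have hm : 0 < mar f P (f x) := lt_of_lt_of_le hpos (le_mar f P hP x)
    rw [Real.log_div (ne_of_gt hpos) (ne_of_gt hm)]; ring

lemma H_mar_le (f : γ → α) (P : γ → ℝ) (hP : ∀ x, 0 ≤ P x) :
    H (mar f P) ≤ H P := by
  have h := chainD f P hP
  have hterm : ∑ x, P x * Real.log (P x / mar f P (f x)) ≤ 0 := by
    refine Finset.sum_nonpos fun x _ => mul_nonpos_of_nonneg_of_nonpos (hP x) ?_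
    rcases eq_or_lt_of_le (hP x) with h0 | hpos
    · simp [← h0]
    · have hm : 0 < mar f P (f x) := lt_of_lt_of_le hpos (le_mar f P hP x)
      exact Real.log_nonpos (by positivity) ((div_le_one hm).2 (le_mar f P hP x))
  unfold H
  linarith

lemma H_nonneg {γ : Type*} [Fintype γ] (P : γ → ℝ) (hP : ∀ x, 0 ≤ P x)
    (hle : ∀ x, P x ≤ 1) : 0 ≤ H P := by
  unfold H
  rw [neg_nonneg]
  refine Finset.sum_nonpos fun x _ => mul_nonpos_of_nonneg_of_nonpos (hP x)
    (Real.log_nonpos (hP x) (hle x))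

lemma H_le_log_card (P : γ → ℝ) (hP : ∀ x, 0 ≤ P x) (hsum : ∑ x, P x = 1) :
    H P ≤ Real.log (Fintype.card γ) := by
  rcases isEmpty_or_nonempty γ with hγ | hγ
  · simp [H] at hsum ⊢
  · have hcard : (0 : ℝ) < Fintype.card γ := by
      have := Fintype.card_pos (α := γ); positivity
    have := gibbs2 P (fun _ => (Fintype.card γ : ℝ)⁻¹) hP (fun _ => by positivity)
      (fun x h => absurd h (by positivity)) (by
        rw [Finset.sum_const, hsum, Finset.card_univ, nsmul_eq_mul,
          mul_inv_cancel₀ (ne_of_gt hcard)])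
    simp only [Real.log_inv] at this
    rw [← Finset.sum_mul, hsum, one_mul] at this
    unfold H
    linarith


lemma ssa {β χ : Type*} [Fintype β] [Fintype χ] [DecidableEq β] [DecidableEq χ]
    (P : γ → ℝ) (a : γ → α) (b : γ → β) (ca : α → χ) (cb : β → χ)
    (hcomm : ∀ x, ca (a x) = cb (b x))
    (hinj : ∀ x y, a x = a y → b x = b y → x = y)
    (hP : ∀ x, 0 ≤ P x) (hsum : ∑ x, P x = 1) :
    H P + H (mar (fun x => ca (a x)) P) ≤ H (mar a P) + H (mar b P) := by
  set Pa := mar a P with hPadef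
  set Pb := mar b P with hPbdef
  set Pc := mar (fun x => ca (a x)) P with hPcdef
  have hPa_nn : ∀ s, 0 ≤ Pa s := mar_nonneg a P hP
  have hPb_nn : ∀ t, 0 ≤ Pb t := mar_nonneg b P hP
  have hPc_nn : ∀ m, 0 ≤ Pc m := mar_nonneg _ P hP
  have hmca : mar ca Pa = Pc := mar_comp a ca P
  have hmcb : mar cb Pb = Pc := by
    rw [hPbdef, mar_comp b cb P, hPcdef]
    have he : (fun x => cb (b x)) = (fun x => ca (a x)) := funext fun x => (hcomm x).symm
    rw [he]
  set R : γ → ℝ := fun x => Pa (a x) * Pb (b x) / Pc (ca (a x)) with hRdef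
  have hR_nn : ∀ x, 0 ≤ R x := fun x => by
    apply div_nonneg (mul_nonneg (hPa_nn _) (hPb_nn _)) (hPc_nn _)
  have hposall : ∀ x, 0 < P x → 0 < Pa (a x) ∧ 0 < Pb (b x) ∧ 0 < Pc (ca (a x)) := by
    intro x hx
    have h1 : 0 < Pa (a x) := lt_of_lt_of_le hx (le_mar a P hP x)
    have h2 : 0 < Pb (b x) := lt_of_lt_of_le hx (le_mar b P hP x)
    have h3 : 0 < Pc (ca (a x)) := by
      have := le_mar ca Pa hPa_nn (a x)
      rw [hmca] at this
      exact lt_of_lt_of_le h1 this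
    exact ⟨h1, h2, h3⟩
  have hRP : ∀ x, R x = 0 → P x = 0 := by
    intro x hx
    by_contra hne
    have hpos : 0 < P x := lt_of_le_of_ne (hP x) (Ne.symm hne)
    obtain ⟨h1, h2, h3⟩ := hposall x hpos
    have : 0 < R x := by rw [hRdef]; positivity
    linarith
  have hsumR : ∑ x, R x ≤ ∑ x, P x := by
    rw [hsum]
    have hinj' : ∀ x ∈ univ, ∀ y ∈ univ,
        (fun z => (a z, b z)) x = (fun z => (a z, b z)) y → x = y := by
      intro x _ y _ h
      exact hinj x y (congrArg Prod.fst h) (congrArg Prod.snd h)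
    have hA : ∑ x, R x = ∑ p ∈ univ.image (fun z => (a z, b z)),
        (Pa p.1 * Pb p.2 / Pc (ca p.1)) := by
      rw [Finset.sum_image hinj']
    have hB : univ.image (fun z => (a z, b z)) ⊆
        univ.filter (fun p : α × β => ca p.1 = cb p.2) := by
      intro p hp
      simp only [Finset.mem_image] at hp
      obtain ⟨z, _, rfl⟩ := hp
      simp [hcomm z]
    have hC : ∑ p ∈ univ.image (fun z => (a z, b z)), (Pa p.1 * Pb p.2 / Pc (ca p.1))
        ≤ ∑ p ∈ univ.filter (fun p : α × β => ca p.1 = cb p.2),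
            (Pa p.1 * Pb p.2 / Pc (ca p.1)) := by
      refine Finset.sum_le_sum_of_subset_of_nonneg hB fun p _ _ => ?_
      exact div_nonneg (mul_nonneg (hPa_nn _) (hPb_nn _)) (hPc_nn _)
    have hD : ∑ p ∈ univ.filter (fun p : α × β => ca p.1 = cb p.2),
        (Pa p.1 * Pb p.2 / Pc (ca p.1)) = ∑ s, Pa s := by
      rw [Finset.sum_filter, Fintype.sum_prod_type]
      refine Finset.sum_congr rfl fun s _ => ?_
      have : ∀ t, (if ca s = cb t then Pa s * Pb t / Pc (ca s) else 0)
          = (Pa s / Pc (ca s)) * (if cb t = ca s then Pb t else 0) := by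
        intro t
        by_cases h : ca s = cb t
        · rw [if_pos h, if_pos h.symm]; ring
        · rw [if_neg h, if_neg (Ne.symm h), mul_zero]
      rw [Finset.sum_congr rfl fun t _ => this t, ← Finset.mul_sum]
      have hmarval : ∑ t, (if cb t = ca s then Pb t else 0) = Pc (ca s) := by
        have : mar cb Pb (ca s) = Pc (ca s) := by rw [hmcb]
        exact this
      rw [hmarval]
      rcases eq_or_lt_of_le (hPc_nn (ca s)) with h0 | hpos
      · have hPas : Pa s = 0 := by
          have hle := le_mar ca Pa hPa_nn s
          rw [hmca] at hle
          have := hPa_nn s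
          linarith [hle.trans_eq h0.symm]
        rw [hPas, ← h0]; ring
      · field_simp
    calc ∑ x, R x ≤ ∑ p ∈ univ.filter (fun p : α × β => ca p.1 = cb p.2),
            (Pa p.1 * Pb p.2 / Pc (ca p.1)) := by rw [hA]; exact hC
      _ = ∑ s, Pa s := hD
      _ = ∑ x, P x := sum_mar a P
      _ = 1 := hsum
  have hgibbs := gibbs2 P R hP hR_nn hRP hsumR
  have hexp : ∀ x, P x * Real.log (R x) =
      P x * Real.log (Pa (a x)) + P x * Real.log (Pb (b x))
        - P x * Real.log (Pc (ca (a x))) := by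
    intro x
    rcases eq_or_lt_of_le (hP x) with h0 | hpos
    · simp [← h0]
    · obtain ⟨h1, h2, h3⟩ := hposall x hpos
      rw [hRdef]
      simp only
      rw [Real.log_div (by positivity) (ne_of_gt h3), Real.log_mul (ne_of_gt h1) (ne_of_gt h2)]
      ring
  rw [Finset.sum_congr rfl fun x _ => hexp x] at hgibbs
  rw [Finset.sum_sub_distrib, Finset.sum_add_distrib] at hgibbs
  rw [sum_comp a P (fun s => Real.log (Pa s)), sum_comp b P (fun t => Real.log (Pb t)),
    sum_comp (fun x => ca (a x)) P (fun m => Real.log (Pc m))] at hgibbs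
  rw [← hPadef, ← hPbdef, ← hPcdef] at hgibbs
  unfold H
  linarith

end EntAux
section CylLayer

variable {d : ℕ} {𝒜 : Type*} [Fintype 𝒜] [MeasurableSpace 𝒜] [MeasurableSingletonClass 𝒜]
variable (μ : Measure (LatZ d → 𝒜)) [IsProbabilityMeasure μ]

/-- restriction of a configuration -/
def resF {Λ₁ Λ₂ : Finset (LatZ d)} (h : Λ₁ ⊆ Λ₂) (x : Λ₂ → 𝒜) : Λ₁ → 𝒜 :=
  fun v => x ⟨v.1, h v.2⟩

lemma measurable_cylSet (Λ : Finset (LatZ d)) (x : Λ → 𝒜) :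
    MeasurableSet {ω : LatZ d → 𝒜 | ∀ v : Λ, ω v.1 = x v} := by
  have : {ω : LatZ d → 𝒜 | ∀ v : Λ, ω v.1 = x v}
      = ⋂ v : Λ, {ω : LatZ d → 𝒜 | ω v.1 = x v} := by
    ext ω; simp [Set.mem_iInter]
  rw [this]
  refine MeasurableSet.iInter fun v => ?_
  show MeasurableSet ((fun ω : LatZ d → 𝒜 => ω v.1) ⁻¹' {x v})
  exact measurable_pi_apply v.1 (measurableSet_singleton (x v))

lemma cylProb_nonneg (Λ : Finset (LatZ d)) (x : Λ → 𝒜) : 0 ≤ cylProb μ Λ x :=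
  ENNReal.toReal_nonneg

lemma cylProb_le_one (Λ : Finset (LatZ d)) (x : Λ → 𝒜) : cylProb μ Λ x ≤ 1 := by
  rw [cylProb, ← ENNReal.toReal_one]
  exact ENNReal.toReal_mono ENNReal.one_ne_top prob_le_one

lemma cylProb_mar [DecidableEq 𝒜] {Λ₁ Λ₂ : Finset (LatZ d)} (h : Λ₁ ⊆ Λ₂) :
    EntAux.mar (resF (𝒜 := 𝒜) h) (cylProb μ Λ₂) = cylProb μ Λ₁ := by
  funext y
  have hset : {ω : LatZ d → 𝒜 | ∀ v : Λ₁, ω v.1 = y v}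
      = ⋃ x : {x : Λ₂ → 𝒜 // resF h x = y}, {ω : LatZ d → 𝒜 | ∀ v : Λ₂, ω v.1 = x.1 v} := by
    ext ω
    constructor
    · intro hω
      refine Set.mem_iUnion.2 ⟨⟨fun v => ω v.1, funext fun v => hω v⟩, fun v => rfl⟩
    · rintro hω
      obtain ⟨x, hx⟩ := Set.mem_iUnion.1 hω
      intro v
      exact (hx ⟨v.1, h v.2⟩).trans (congrFun x.2 v)
  have hdisj : Pairwise (Function.onFun Disjoint
      (fun x : {x : Λ₂ → 𝒜 // resF h x = y} =>
        {ω : LatZ d → 𝒜 | ∀ v : Λ₂, ω v.1 = x.1 v})) := by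
    intro x x' hne
    rw [Function.onFun, Set.disjoint_left]
    intro ω hω hω'
    apply hne
    ext v
    rw [← hω v, ← hω' v]
  have hμ : μ {ω : LatZ d → 𝒜 | ∀ v : Λ₁, ω v.1 = y v}
      = ∑ x : {x : Λ₂ → 𝒜 // resF h x = y},
          μ {ω : LatZ d → 𝒜 | ∀ v : Λ₂, ω v.1 = x.1 v} := by
    rw [hset, measure_iUnion hdisj (fun x => measurable_cylSet Λ₂ x.1), tsum_fintype]
  calc EntAux.mar (resF (𝒜 := 𝒜) h) (cylProb μ Λ₂) y
      = ∑ x ∈ Finset.univ.filter (fun x : Λ₂ → 𝒜 => resF h x = y), cylProb μ Λ₂ x :=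
        (Finset.sum_filter _ _).symm
    _ = ∑ x : {x : Λ₂ → 𝒜 // resF h x = y}, cylProb μ Λ₂ x.1 :=
        Finset.sum_subtype _ (fun x => by simp) _
    _ = cylProb μ Λ₁ y := by
        rw [cylProb, hμ, ENNReal.toReal_sum (fun x _ => measure_ne_top μ _)]
        rfl

lemma sum_cylProb (Λ : Finset (LatZ d)) : ∑ x : Λ → 𝒜, cylProb μ Λ x = 1 := by
  have hset : (Set.univ : Set (LatZ d → 𝒜))
      = ⋃ x : Λ → 𝒜, {ω : LatZ d → 𝒜 | ∀ v : Λ, ω v.1 = x v} := by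
    ext ω
    simp only [Set.mem_univ, true_iff, Set.mem_iUnion]
    exact ⟨fun v => ω v.1, fun v => rfl⟩
  have hdisj : Pairwise (Function.onFun Disjoint
      (fun x : Λ → 𝒜 => {ω : LatZ d → 𝒜 | ∀ v : Λ, ω v.1 = x v})) := by
    intro x x' hne
    rw [Function.onFun, Set.disjoint_left]
    intro ω hω hω'
    apply hne
    ext v
    rw [← hω v, ← hω' v]
  have hμ := measure_iUnion (μ := μ) hdisj (fun x => measurable_cylSet Λ x)
  rw [← hset, measure_univ, tsum_fintype] at hμ
  have := congrArg ENNReal.toReal hμ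
  rw [ENNReal.toReal_one, ENNReal.toReal_sum (fun x _ => measure_ne_top μ _)] at this
  exact this.symm

lemma cylProb_res_le {Λ₁ Λ₂ : Finset (LatZ d)} (h : Λ₁ ⊆ Λ₂) (x : Λ₂ → 𝒜) :
    cylProb μ Λ₂ x ≤ cylProb μ Λ₁ (resF h x) := by
  apply ENNReal.toReal_mono (measure_ne_top μ _)
  apply measure_mono
  intro ω hω v
  exact hω ⟨v.1, h v.2⟩

end CylLayer
section EntLayer

variable {d : ℕ} {𝒜 : Type*} [Fintype 𝒜] [MeasurableSpace 𝒜] [MeasurableSingletonClass 𝒜]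
variable (μ : Measure (LatZ d → 𝒜)) [IsProbabilityMeasure μ]

lemma entS_eq_H (Λ : Finset (LatZ d)) : entS μ Λ = EntAux.H (cylProb μ Λ) := rfl

lemma condEnt_eq_sub (Λ Λ' : Finset (LatZ d)) :
    condEnt μ Λ Λ' = entS μ (Λ ∪ Λ') - entS μ Λ' := by
  classical
  have hsub : Λ' ⊆ Λ ∪ Λ' := Finset.subset_union_right
  have hmar := cylProb_mar μ hsub
  have hch := EntAux.chainD (resF (𝒜 := 𝒜) hsub) (cylProb μ (Λ ∪ Λ'))
    (fun x => cylProb_nonneg μ _ x)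
  rw [hmar] at hch
  have hcond : condEnt μ Λ Λ' = -∑ x : ((Λ ∪ Λ' : Finset (LatZ d)) → 𝒜),
      cylProb μ (Λ ∪ Λ') x *
        Real.log (cylProb μ (Λ ∪ Λ') x / cylProb μ Λ' (resF hsub x)) := rfl
  have e1 : entS μ (Λ ∪ Λ') = -∑ x : ((Λ ∪ Λ' : Finset (LatZ d)) → 𝒜),
      cylProb μ (Λ ∪ Λ') x * Real.log (cylProb μ (Λ ∪ Λ') x) := rfl
  have e2 : entS μ Λ' = -∑ s : (Λ' → 𝒜),
      cylProb μ Λ' s * Real.log (cylProb μ Λ' s) := rfl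
  rw [hcond, hch, e1, e2]
  ring

lemma entS_mono {Λ₁ Λ₂ : Finset (LatZ d)} (h : Λ₁ ⊆ Λ₂) : entS μ Λ₁ ≤ entS μ Λ₂ := by
  classical
  have hm := EntAux.H_mar_le (resF (𝒜 := 𝒜) h) (cylProb μ Λ₂) (fun x => cylProb_nonneg μ _ x)
  rw [cylProb_mar μ h] at hm
  exact hm

lemma entS_nonneg (Λ : Finset (LatZ d)) : 0 ≤ entS μ Λ :=
  EntAux.H_nonneg (cylProb μ Λ) (fun x => cylProb_nonneg μ _ x) (fun x => cylProb_le_one μ _ x)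

lemma entS_le_card (Λ : Finset (LatZ d)) :
    entS μ Λ ≤ (Λ.card : ℝ) * Real.log (Fintype.card 𝒜) := by
  classical
  have h := EntAux.H_le_log_card (cylProb μ Λ) (fun x => cylProb_nonneg μ _ x) (sum_cylProb μ Λ)
  have hcard : Fintype.card (Λ → 𝒜) = Fintype.card 𝒜 ^ Λ.card := by
    rw [Fintype.card_fun, Fintype.card_coe]
  rw [hcard] at h
  rw [entS_eq_H]
  calc EntAux.H (cylProb μ Λ) ≤ Real.log ((Fintype.card 𝒜 ^ Λ.card : ℕ) : ℝ) := h
    _ = (Λ.card : ℝ) * Real.log (Fintype.card 𝒜) := by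
        push_cast
        rw [Real.log_pow]

lemma entS_empty : entS μ (∅ : Finset (LatZ d)) = 0 := by
  apply le_antisymm
  · have := entS_le_card μ (∅ : Finset (LatZ d))
    simpa using this
  · exact entS_nonneg μ ∅

lemma condEnt_nonneg (Λ Λ' : Finset (LatZ d)) : 0 ≤ condEnt μ Λ Λ' := by
  rw [condEnt_eq_sub, sub_nonneg]
  exact entS_mono μ Finset.subset_union_right

lemma condEnt_anti {Λ Λ'₁ Λ'₂ : Finset (LatZ d)} (h : Λ'₁ ⊆ Λ'₂) :
    condEnt μ Λ Λ'₂ ≤ condEnt μ Λ Λ'₁ := by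
  classical
  rw [condEnt_eq_sub, condEnt_eq_sub]
  have h1 : Λ ∪ Λ'₁ ⊆ Λ ∪ Λ'₂ := Finset.union_subset_union_right h
  have h2 : Λ'₂ ⊆ Λ ∪ Λ'₂ := Finset.subset_union_right
  have h3 : Λ'₁ ⊆ Λ ∪ Λ'₁ := Finset.subset_union_right
  have hinj : ∀ x y : ((Λ ∪ Λ'₂ : Finset (LatZ d)) → 𝒜),
      resF (𝒜 := 𝒜) h1 x = resF h1 y → resF (𝒜 := 𝒜) h2 x = resF h2 y → x = y := by
    intro x y hax hbx
    funext v
    rcases Finset.mem_union.1 v.2 with hv | hv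
    · exact congrFun hax ⟨v.1, Finset.mem_union_left _ hv⟩
    · exact congrFun hbx ⟨v.1, hv⟩
  have hssa := EntAux.ssa (cylProb μ (Λ ∪ Λ'₂)) (resF (𝒜 := 𝒜) h1) (resF (𝒜 := 𝒜) h2)
      (resF (𝒜 := 𝒜) h3) (resF (𝒜 := 𝒜) h) (fun x => rfl) hinj
      (fun x => cylProb_nonneg μ _ x) (sum_cylProb μ _)
  rw [cylProb_mar μ h1, cylProb_mar μ h2] at hssa
  have hca : (fun x : ((Λ ∪ Λ'₂ : Finset (LatZ d)) → 𝒜) => resF (𝒜 := 𝒜) h3 (resF h1 x))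
      = resF (𝒜 := 𝒜) (h3.trans h1) := rfl
  rw [hca, cylProb_mar μ (h3.trans h1)] at hssa
  have e : ∀ Λ0 : Finset (LatZ d), entS μ Λ0 = EntAux.H (cylProb μ Λ0) := fun _ => rfl
  rw [e, e, e, e]
  linarith

lemma condEnt_le_entS (Λ Λ' : Finset (LatZ d)) : condEnt μ Λ Λ' ≤ entS μ Λ := by
  have h := condEnt_anti μ (Λ := Λ) (Finset.empty_subset Λ')
  rw [condEnt_eq_sub μ Λ ∅, Finset.union_empty, entS_empty μ] at h
  linarith

lemma chainSum {ι : Type*} [LinearOrder ι] (B : ι → Finset (LatZ d)) (Q : Finset ι) :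
    entS μ (Q.biUnion B) = ∑ q ∈ Q, condEnt μ (B q) ((Q.filter (· < q)).biUnion B) := by
  classical
  induction Q using Finset.induction_on_max with
  | empty => simp [entS_empty μ]
  | insert a s hlt ih =>
    rw [Finset.biUnion_insert,
      Finset.sum_insert (fun h => absurd (hlt a h) (lt_irrefl a))]
    have hfa : (insert a s).filter (· < a) = s := by
      rw [Finset.filter_insert, if_neg (lt_irrefl a)]
      exact Finset.filter_true_of_mem fun x hx => hlt x hx
    have hfq : ∀ q ∈ s, (insert a s).filter (· < q) = s.filter (· < q) := by
      intro q hq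
      rw [Finset.filter_insert, if_neg (asymm (hlt q hq))]
    rw [hfa, Finset.sum_congr rfl (fun q hq => by rw [hfq q hq]), ← ih,
      condEnt_eq_sub]
    ring

lemma measurable_shiftMap (w : LatZ d) : Measurable (shiftMap (𝒜 := 𝒜) w) :=
  measurable_pi_lambda _ fun u => measurable_pi_apply (u + w)

lemma cylProb_shift (hinv : TransInv μ) (w : LatZ d) (Λ : Finset (LatZ d))
    (x : (Λ.image (· + w)) → 𝒜) :
    cylProb μ (Λ.image (· + w)) x
      = cylProb μ Λ (fun v => x ⟨v.1 + w, Finset.mem_image_of_mem _ v.2⟩) := by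
  rw [cylProb, cylProb]
  congr 1
  set y : Λ → 𝒜 := fun v => x ⟨v.1 + w, Finset.mem_image_of_mem _ v.2⟩ with hy
  have hpre : shiftMap (𝒜 := 𝒜) w ⁻¹' {ω | ∀ v : Λ, ω v.1 = y v}
      = {ω : LatZ d → 𝒜 | ∀ u : (Λ.image (· + w) : Finset (LatZ d)), ω u.1 = x u} := by
    ext ω
    simp only [Set.mem_preimage, Set.mem_setOf_eq]
    constructor
    · intro hω u
      obtain ⟨v, hv, hvu⟩ := Finset.mem_image.1 u.2
      have hu : u = ⟨v + w, hvu ▸ u.2⟩ := Subtype.ext hvu.symm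
      rw [hu]
      exact hω ⟨v, hv⟩
    · intro hω v
      exact hω ⟨v.1 + w, Finset.mem_image_of_mem _ v.2⟩
  calc μ {ω : LatZ d → 𝒜 | ∀ u : (Λ.image (· + w) : Finset (LatZ d)), ω u.1 = x u}
      = μ (shiftMap (𝒜 := 𝒜) w ⁻¹' {ω | ∀ v : Λ, ω v.1 = y v}) := by rw [hpre]
    _ = μ.map (shiftMap (𝒜 := 𝒜) w) {ω | ∀ v : Λ, ω v.1 = y v} :=
        (Measure.map_apply (measurable_shiftMap w) (measurable_cylSet Λ y)).symm
    _ = μ {ω | ∀ v : Λ, ω v.1 = y v} := by rw [hinv w]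

lemma entS_shift (hinv : TransInv μ) (w : LatZ d) (Λ : Finset (LatZ d)) :
    entS μ (Λ.image (· + w)) = entS μ Λ := by
  classical
  let g : ((Λ.image (· + w) : Finset (LatZ d)) → 𝒜) → (Λ → 𝒜) :=
    fun x => fun v => x ⟨v.1 + w, Finset.mem_image_of_mem _ v.2⟩
  have hbij : Function.Bijective g := by
    constructor
    · intro x x' hxx
      funext u
      obtain ⟨v, hv, hvu⟩ := Finset.mem_image.1 u.2
      have hu : u = ⟨v + w, hvu ▸ u.2⟩ := Subtype.ext hvu.symm
      rw [hu]
      show g x ⟨v, hv⟩ = g x' ⟨v, hv⟩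
      rw [hxx]
    · intro yy
      refine ⟨fun u => yy ⟨u.1 - w, ?_⟩, ?_⟩
      · obtain ⟨v, hv, hvu⟩ := Finset.mem_image.1 u.2
        rw [← hvu]
        simpa using hv
      · funext v
        show yy ⟨(v.1 + w) - w, _⟩ = yy v
        congr 1
        exact Subtype.ext (by simp)

  have := Fintype.sum_bijective g hbij
    (fun x => cylProb μ (Λ.image (· + w)) x * Real.log (cylProb μ (Λ.image (· + w)) x))
    (fun yv => cylProb μ Λ yv * Real.log (cylProb μ Λ yv))
    (fun x => congrArg (fun t => t * Real.log t) (cylProb_shift μ hinv w Λ x))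
  rw [entS, entS, this]

lemma condEnt_shift (hinv : TransInv μ) (w : LatZ d) (Λ Λ' : Finset (LatZ d)) :
    condEnt μ (Λ.image (· + w)) (Λ'.image (· + w)) = condEnt μ Λ Λ' := by
  rw [condEnt_eq_sub, condEnt_eq_sub, ← Finset.image_union,
    entS_shift μ hinv w, entS_shift μ hinv w]

end EntLayer
section Geo

variable {d : ℕ}

lemma mem_Vbox {n : ℕ} {v : LatZ d} :
    v ∈ Vbox d n ↔ ∀ i, -(n : ℤ) ≤ v i ∧ v i ≤ n := by
  simp [Vbox, Fintype.mem_piFinset, Finset.mem_Icc]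

lemma Vbox_mono {m n : ℕ} (h : m ≤ n) : Vbox d m ⊆ Vbox d n := by
  intro v hv
  rw [mem_Vbox] at hv ⊢
  intro i
  have := hv i
  have hmn : (m : ℤ) ≤ n := by exact_mod_cast h
  omega

lemma card_Vbox (n : ℕ) : (Vbox d n).card = (2 * n + 1) ^ d := by
  rw [Vbox, Fintype.card_piFinset]
  have : ∀ i : Fin d, (Finset.Icc (-(n : ℤ)) (n : ℤ)).card = 2 * n + 1 := by
    intro i
    rw [Int.card_Icc]
    omega
  rw [Finset.prod_congr rfl (fun i _ => this i)]
  simp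

lemma mem_interBox {S : Set (LatZ d)} {n : ℕ} {v : LatZ d} :
    v ∈ interBox d S n ↔ v ∈ Vbox d n ∧ v ∈ S := by
  simp [interBox, Finset.mem_filter]

lemma exists_Vbox_superset (F : Finset (LatZ d)) : ∃ M : ℕ, F ⊆ Vbox d M := by
  classical
  induction F using Finset.induction_on with
  | empty => exact ⟨0, Finset.empty_subset _⟩
  | @insert v F' hx ih =>
    obtain ⟨M₀, hM₀⟩ := ih
    refine ⟨M₀ + (Finset.univ.sup fun i => (v i).natAbs), ?_⟩
    have hv : v ∈ Vbox d (M₀ + (Finset.univ.sup fun i => (v i).natAbs)) := by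
      rw [mem_Vbox]
      intro i
      have h1 : (v i).natAbs ≤ Finset.univ.sup fun j => (v j).natAbs :=
        Finset.le_sup (f := fun j => (v j).natAbs) (Finset.mem_univ i)
      have h2 : ((v i).natAbs : ℤ) ≤ ((Finset.univ.sup fun i => (v i).natAbs : ℕ) : ℤ) := by
        exact_mod_cast h1
      push_cast at h2 ⊢
      omega
    intro u hu
    rcases Finset.mem_insert.1 hu with h | hu'
    · rw [h]; exact hv
    · exact Vbox_mono (Nat.le_add_right _ _) (hM₀ hu')

lemma latt_add (e : Fin d → LatZ d) (a b : Fin d → ℤ) :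
    latt e (a + b) = latt e a + latt e b := by
  rw [latt, latt, latt, ← Finset.sum_add_distrib]
  exact Finset.sum_congr rfl fun i _ => by
    show (a i + b i) • e i = a i • e i + b i • e i
    rw [add_smul]

lemma latt_zero (e : Fin d → LatZ d) : latt e 0 = 0 := by
  rw [latt]
  exact Finset.sum_eq_zero fun i _ => by
    show (0 : ℤ) • e i = 0
    rw [zero_smul]

lemma latt_inj {e : Fin d → LatZ d} (hind : LinearIndependent ℤ e) :
    Function.Injective (latt e) := by
  rw [Fintype.linearIndependent_iff] at hind
  intro a b hab
  funext i
  have hz : latt e (a - b) = 0 := by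
    have : a = (a - b) + b := by ring
    rw [this, latt_add] at hab
    have hb := hab
    simpa using congrArg (fun z => z - latt e b) hb
  have := hind (a - b) (by rw [← hz]; rfl) i
  have : a i - b i = 0 := by simpa using this
  linarith

lemma lexLt_iff_toLex_lt (a b : Fin d → ℤ) : lexLt a b ↔ toLex a < toLex b := by
  constructor
  · rintro ⟨i, h1, h2⟩
    exact ⟨i, fun j hj => h2 j hj, h1⟩
  · rintro ⟨i, h1, h2⟩
    exact ⟨i, h2, fun j hj => h1 j hj⟩

lemma lexLt_add (a b c : Fin d → ℤ) (h : lexLt a b) : lexLt (a + c) (b + c) := by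
  obtain ⟨i, h1, h2⟩ := h
  exact ⟨i, by simpa using h1, fun j hj => by simpa using h2 j hj⟩

lemma lexLt_sub_zero {a b : Fin d → ℤ} (h : lexLt a b) : lexLt (a - b) 0 := by
  have := lexLt_add a b (-b) h
  simpa [sub_eq_add_neg] using this

lemma lexLt_of_sub {a b : Fin d → ℤ} (h : lexLt (a - b) 0) : lexLt a b := by
  have := lexLt_add (a - b) 0 b h
  simpa using this

end Geo


lemma Vbox_ratio_tendsto (d ρ : ℕ) :
    Filter.Tendsto (fun n : ℕ => ((Vbox d (n - ρ)).card : ℝ) / ((Vbox d n).card : ℝ))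
      Filter.atTop (nhds 1) := by
  have hden : Filter.Tendsto (fun n : ℕ => 2 * (n : ℝ) + 1) Filter.atTop Filter.atTop := by
    apply Filter.tendsto_atTop_add_const_right
    exact (tendsto_natCast_atTop_atTop (R := ℝ)).const_mul_atTop two_pos
  have h0 : Filter.Tendsto (fun n : ℕ => (2 * (ρ : ℝ)) / (2 * (n : ℝ) + 1))
      Filter.atTop (nhds 0) := Filter.Tendsto.div_atTop tendsto_const_nhds hden
  have hg : Filter.Tendsto (fun n : ℕ => 1 - (2 * (ρ : ℝ)) / (2 * (n : ℝ) + 1))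
      Filter.atTop (nhds 1) := by
    have h1 := Filter.Tendsto.sub (tendsto_const_nhds (x := (1 : ℝ))
      (f := Filter.atTop (α := ℕ))) h0
    simpa using h1
  have hpow : Filter.Tendsto (fun n : ℕ => (1 - (2 * (ρ : ℝ)) / (2 * (n : ℝ) + 1)) ^ d)
      Filter.atTop (nhds 1) := by
    have h1 := hg.pow d
    simpa using h1
  have hEq : (fun n : ℕ => (1 - (2 * (ρ : ℝ)) / (2 * (n : ℝ) + 1)) ^ d)
      =ᶠ[Filter.atTop] (fun n : ℕ => ((Vbox d (n - ρ)).card : ℝ) / ((Vbox d n).card : ℝ)) := by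
    filter_upwards [Filter.eventually_ge_atTop ρ] with n hn
    rw [card_Vbox, card_Vbox]
    have hpos : (0 : ℝ) < 2 * (n : ℝ) + 1 := by positivity
    have hcast : ((n - ρ : ℕ) : ℝ) = (n : ℝ) - ρ := by
      rw [Nat.cast_sub hn]
    push_cast
    rw [hcast, ← div_pow]
    congr 1
    field_simp
    ring
  exact Filter.Tendsto.congr' hEq hpow



open Filter in
set_option maxHeartbeats 1000000 in
/-- Main Theorem. Let `μ` be a translation invariant probability measure on
`𝒜^(ℤ^d)`, `(A, G)` a tiling of `ℤ^d` (with `G` generated by the linearly independent family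
`e`), and `A = A_1 ∪ … ∪ A_N` a partition into nonempty sets. Then the entropy density
`s_μ = lim_n S(V_n)/|V_n|` exists and
`s_μ = (1/|A|) Σ_{k} S(A_k | (A_k + G^-) ∪ (A_{<k} + G))`, where each conditional entropy
with infinite conditioning set `Λ'` is the limit `lim_n S(A_k | Λ' ∩ V_n)`. -/
theorem entropy_density_tiling_decomposition {d : ℕ} {𝒜 : Type*} [Fintype 𝒜] [Nonempty 𝒜]
    [MeasurableSpace 𝒜] [MeasurableSingletonClass 𝒜]
    (μ : Measure (LatZ d → 𝒜)) [IsProbabilityMeasure μ] (hinv : TransInv μ)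
    (A : Finset (LatZ d)) (e : Fin d → LatZ d) (htile : IsTiling A e)
    (N : ℕ) (hN1 : 1 ≤ N) (hNA : N ≤ A.card)
    (parts : Fin N → Finset (LatZ d))
    (hne : ∀ k, (parts k).Nonempty)
    (hdisj : ∀ k l, k ≠ l → Disjoint (parts k) (parts l))
    (hunion : Finset.univ.biUnion parts = A) :
    ∃ (s : ℝ) (c : Fin N → ℝ),
      Filter.Tendsto (fun n => entS μ (Vbox d n) / ((Vbox d n).card : ℝ))
        Filter.atTop (nhds s) ∧
      (∀ k : Fin N,
        Filter.Tendsto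
          (fun n => condEnt μ (parts k)
            (interBox d
              (((↑(parts k) : Set (LatZ d)) + Gneg e) ∪
                ((↑((Finset.Iio k).biUnion parts) : Set (LatZ d)) + Gfull e)) n))
          Filter.atTop (nhds (c k))) ∧
      s = (1 / (A.card : ℝ)) * ∑ k : Fin N, c k := by
  classical
  haveI : WellFoundedLT (Fin d) := Finite.to_wellFoundedLT
  set T : (Fin d → ℤ) → LatZ d := latt e with hTdef
  have hTadd : ∀ a b, T (a + b) = T a + T b := latt_add e
  have hTinj : Function.Injective T := latt_inj htile.indep
  have tile_disj : ∀ c0 c1 : Fin d → ℤ, c0 ≠ c1 →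
      Disjoint (A.image (· + T c0)) (A.image (· + T c1)) :=
    fun c0 c1 h => htile.disj c0 c1 (fun he => h (hTinj he))
  have parts_sub : ∀ k, parts k ⊆ A := by
    intro k p hp
    rw [← hunion]
    exact Finset.mem_biUnion.2 ⟨k, Finset.mem_univ k, hp⟩
  have card_parts_sum : ∑ k, (parts k).card = A.card := by
    rw [← hunion, Finset.card_biUnion (fun k _ l _ h => hdisj k l h)]
  have hAne : A.Nonempty := ⟨0, htile.zero_mem⟩
  have hAcard_pos : (0 : ℝ) < (A.card : ℝ) := by
    exact_mod_cast Finset.card_pos.2 hAne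
  set Lam : Fin N → Set (LatZ d) := fun k =>
    ((↑(parts k) : Set (LatZ d)) + Gneg e) ∪
      ((↑((Finset.Iio k).biUnion parts) : Set (LatZ d)) + Gfull e) with hLam
  set seqf : Fin N → ℕ → ℝ := fun k n => condEnt μ (parts k) (interBox d (Lam k) n) with hseqf
  have interBox_mono : ∀ (S : Set (LatZ d)) (m n : ℕ), m ≤ n → interBox d S m ⊆ interBox d S n := by
    intro S m n h v hv
    rw [mem_interBox] at hv ⊢
    exact ⟨Vbox_mono h hv.1, hv.2⟩
  have interBox_sub : ∀ (S : Set (LatZ d)) (n : ℕ), ↑(interBox d S n) ⊆ S := by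
    intro S n v hv
    rw [Finset.mem_coe, mem_interBox] at hv
    exact hv.2
  have seq_anti : ∀ k, Antitone (seqf k) := fun k m n h =>
    condEnt_anti μ (interBox_mono (Lam k) m n h)
  have seq_nonneg : ∀ k n, 0 ≤ seqf k n := fun k n => condEnt_nonneg μ _ _
  set cs : Fin N → ℝ := fun k => ⨅ n, seqf k n with hcs
  have hbdd : ∀ k, BddBelow (Set.range (seqf k)) := by
    intro k
    refine ⟨0, fun x hx => ?_⟩
    obtain ⟨n, rfl⟩ := hx
    exact seq_nonneg k n
  have hc_tend : ∀ k, Tendsto (seqf k) atTop (nhds (cs k)) :=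
    fun k => tendsto_atTop_ciInf (seq_anti k) (hbdd k)
  have hc_le : ∀ k n, cs k ≤ seqf k n := fun k n => ciInf_le (hbdd k) n
  have hc_nonneg : ∀ k, 0 ≤ cs k := fun k => le_ciInf fun n => seq_nonneg k n
  have KO : ∀ (k : Fin N) (F : Finset (LatZ d)), ↑F ⊆ Lam k →
      cs k ≤ condEnt μ (parts k) F := by
    intro k F hF
    obtain ⟨M, hM⟩ := exists_Vbox_superset F
    have hFsub : F ⊆ interBox d (Lam k) M := by
      intro v hv
      rw [mem_interBox]
      exact ⟨hM hv, hF hv⟩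
    calc cs k ≤ seqf k M := hc_le k M
      _ ≤ condEnt μ (parts k) F := condEnt_anti μ hFsub
  -- decomposition of sites
  have hcov := htile.cover
  choose aOf haOfA cOf hdec using hcov
  have huniq : ∀ {a₁ : LatZ d} {c₁ : Fin d → ℤ} {a₂ : LatZ d} {c₂ : Fin d → ℤ},
      a₁ ∈ A → a₂ ∈ A → a₁ + T c₁ = a₂ + T c₂ → a₁ = a₂ ∧ c₁ = c₂ := by
    intro a₁ c₁ a₂ c₂ h₁ h₂ heq
    have hc : c₁ = c₂ := by
      by_contra hne
      have hd := tile_disj c₁ c₂ hne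
      have hm₁ : a₁ + T c₁ ∈ A.image (· + T c₁) := Finset.mem_image_of_mem _ h₁
      have hm₂ : a₁ + T c₁ ∈ A.image (· + T c₂) := by
        rw [heq]; exact Finset.mem_image_of_mem _ h₂
      exact Finset.disjoint_left.1 hd hm₁ hm₂
    subst hc
    exact ⟨by simpa using heq, rfl⟩
  have hcOf_eq : ∀ (v : LatZ d) (a : LatZ d) (cv : Fin d → ℤ), a ∈ A → v = a + T cv →
      aOf v = a ∧ cOf v = cv := by
    intro v a cv ha hv
    exact huniq (haOfA v) ha ((hdec v).symm.trans hv)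
  -- the key encoding into a lexicographic order
  set key : Fin N → (Fin d → ℤ) → Lex (Fin N × Lex (Fin d → ℤ)) :=
    fun k c0 => toLex (k, toLex c0) with hkey
  have key_lt : ∀ {j k : Fin N} {c1 c0 : Fin d → ℤ},
      key j c1 < key k c0 ↔ (j < k ∨ (j = k ∧ lexLt c1 c0)) := by
    intro j k c1 c0
    rw [hkey]
    simp only []
    rw [Prod.Lex.lt_iff]
    constructor
    · rintro (h | ⟨h1, h2⟩)
      · exact Or.inl h
      · exact Or.inr ⟨h1, (lexLt_iff_toLex_lt c1 c0).2 h2⟩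
    · rintro (h | ⟨h1, h2⟩)
      · exact Or.inl h
      · exact Or.inr ⟨h1, (lexLt_iff_toLex_lt c1 c0).1 h2⟩
  have key_inj : ∀ {j k : Fin N} {c1 c0 : Fin d → ℤ},
      key j c1 = key k c0 → j = k ∧ c1 = c0 := by
    intro j k c1 c0 h
    rw [hkey] at h
    have h' : (j, toLex c1) = (k, toLex c0) := congrArg ofLex h
    refine ⟨congrArg Prod.fst h', ?_⟩
    have h2 : toLex c1 = toLex c0 := congrArg Prod.snd h'
    exact congrArg ofLex h2
  -- the W sets, candidate coordinates, and good coordinates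
  set W : ℕ → Finset (LatZ d) := fun r =>
    A ∪ Finset.univ.biUnion (fun k => interBox d (Lam k) r) with hW
  set Qc : ℕ → Finset (Fin d → ℤ) := fun n => (Vbox d n).image cOf with hQc
  set good : ℕ → ℕ → Finset (Fin d → ℤ) := fun n r =>
    (Qc n).filter (fun c0 => ∀ w ∈ W r, w + T c0 ∈ Vbox d n) with hgood
  have hA_W : ∀ r, A ⊆ W r := fun r => Finset.subset_union_left
  have main : ∀ r n,
      ((good n r).card : ℝ) * (∑ k, cs k) ≤ entS μ (Vbox d n) ∧
      entS μ (Vbox d n) ≤ ((good n r).card : ℝ) * (∑ k, seqf k r)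
        + (((Vbox d n).card : ℝ) - ((good n r).card : ℝ) * (A.card : ℝ))
            * Real.log (Fintype.card 𝒜) := by
    intro r n
    set Q : Finset (Lex (Fin N × Lex (Fin d → ℤ))) :=
      (Finset.univ ×ˢ Qc n).image (fun p => key p.1 p.2) with hQ
    set Blk : Lex (Fin N × Lex (Fin d → ℤ)) → Finset (LatZ d) :=
      fun κ => ((parts (ofLex κ).1).image (· + T (ofLex ((ofLex κ).2)))) ∩ Vbox d n with hBlkdef
    have hBlk_key : ∀ (k : Fin N) (c0 : Fin d → ℤ),
        Blk (key k c0) = ((parts k).image (· + T c0)) ∩ Vbox d n := fun _ _ => rfl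
    have hQmem : ∀ {κ}, κ ∈ Q → ∃ k c0, c0 ∈ Qc n ∧ κ = key k c0 := by
      intro κ hκ
      rw [hQ] at hκ
      obtain ⟨p, hp, hpκ⟩ := Finset.mem_image.1 hκ
      exact ⟨p.1, p.2, (Finset.mem_product.1 hp).2, hpκ.symm⟩
    have hQmem' : ∀ (k : Fin N) (c0 : Fin d → ℤ), c0 ∈ Qc n → key k c0 ∈ Q := by
      intro k c0 h
      rw [hQ]
      exact Finset.mem_image.2 ⟨(k, c0), Finset.mem_product.2 ⟨Finset.mem_univ _, h⟩, rfl⟩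
    have hQcover : Q.biUnion Blk = Vbox d n := by
      apply Finset.Subset.antisymm
      · intro v hv
        obtain ⟨κ, _, hκv⟩ := Finset.mem_biUnion.1 hv
        exact (Finset.mem_inter.1 hκv).2
      · intro v hv
        have haA : aOf v ∈ Finset.univ.biUnion parts := by rw [hunion]; exact haOfA v
        obtain ⟨k, _, hk⟩ := Finset.mem_biUnion.1 haA
        refine Finset.mem_biUnion.2 ⟨key k (cOf v),
          hQmem' k (cOf v) (Finset.mem_image_of_mem cOf hv), ?_⟩
        rw [hBlk_key]
        exact Finset.mem_inter.2 ⟨Finset.mem_image.2 ⟨aOf v, hk, (hdec v).symm⟩, hv⟩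
    have hBlk_disj : ∀ κ ∈ Q, ∀ κ' ∈ Q, κ ≠ κ' → Disjoint (Blk κ) (Blk κ') := by
      intro κ hκ κ' hκ' hne
      obtain ⟨k, c0, _, rfl⟩ := hQmem hκ
      obtain ⟨j, c1, _, rfl⟩ := hQmem hκ'
      rw [hBlk_key, hBlk_key]
      by_cases hc : c0 = c1
      · subst hc
        have hkj : k ≠ j := fun h => hne (by rw [h])
        refine Disjoint.mono Finset.inter_subset_left Finset.inter_subset_left ?_
        exact (Finset.disjoint_image (add_left_injective (T c0))).2 (hdisj k j hkj)
      · refine Disjoint.mono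
          (Finset.inter_subset_left.trans (Finset.image_subset_image (parts_sub k)))
          (Finset.inter_subset_left.trans (Finset.image_subset_image (parts_sub j))) ?_
        exact tile_disj c0 c1 hc
    have hchain := chainSum μ Blk Q
    rw [hQcover] at hchain
    -- facts about good coordinates
    have hgood_mem : ∀ {c0}, c0 ∈ good n r →
        c0 ∈ Qc n ∧ ∀ w ∈ W r, w + T c0 ∈ Vbox d n := by
      intro c0 h
      rw [hgood] at h
      exact ⟨(Finset.mem_filter.1 h).1, (Finset.mem_filter.1 h).2⟩
    have hfull : ∀ (k : Fin N) {c0}, c0 ∈ good n r →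
        Blk (key k c0) = (parts k).image (· + T c0) := by
      intro k c0 hg
      rw [hBlk_key]
      apply Finset.inter_eq_left.2
      intro v hv
      obtain ⟨p, hp, hpv⟩ := Finset.mem_image.1 hv
      rw [← hpv]
      exact (hgood_mem hg).2 p (hA_W r (parts_sub k hp))
    -- membership chase for the conditioning set
    have hPsub : ∀ (k : Fin N) (c0 : Fin d → ℤ),
        ∀ v ∈ (Q.filter (· < key k c0)).biUnion Blk, v + (- T c0) ∈ Lam k := by
      intro k c0 v hv
      obtain ⟨κ', hκ'f, hvκ'⟩ := Finset.mem_biUnion.1 hv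
      obtain ⟨hκ'Q, hκ'lt⟩ := Finset.mem_filter.1 hκ'f
      obtain ⟨j, c1, _, rfl⟩ := hQmem hκ'Q
      rw [hBlk_key] at hvκ'
      obtain ⟨p, hpj, hpv⟩ := Finset.mem_image.1 (Finset.mem_inter.1 hvκ').1
      have harith : v + (- T c0) = p + T (c1 - c0) := by
        have h1 : T ((c1 - c0) + c0) = T (c1 - c0) + T c0 := hTadd _ _
        rw [sub_add_cancel] at h1
        rw [← hpv, h1]
        abel
      rw [harith]
      rcases key_lt.1 hκ'lt with hjk | ⟨hjk, hlex⟩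
      · apply Set.mem_union_right
        refine Set.mem_add.2 ⟨p, ?_, T (c1 - c0), ⟨c1 - c0, rfl⟩, rfl⟩
        exact Finset.mem_coe.2 (Finset.mem_biUnion.2 ⟨j, Finset.mem_Iio.2 hjk, hpj⟩)
      · apply Set.mem_union_left
        subst hjk
        refine Set.mem_add.2 ⟨p, Finset.mem_coe.2 hpj, T (c1 - c0),
          ⟨c1 - c0, lexLt_sub_zero hlex, rfl⟩, rfl⟩
    -- lower bound on good terms
    have hterm_low : ∀ (k : Fin N) (c0 : Fin d → ℤ), c0 ∈ good n r →
        cs k ≤ condEnt μ (Blk (key k c0)) ((Q.filter (· < key k c0)).biUnion Blk) := by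
      intro k c0 hg
      set P := (Q.filter (· < key k c0)).biUnion Blk with hP
      set P0 := P.image (· + (- T c0)) with hP0
      have hPP0 : P = P0.image (· + T c0) := by
        rw [hP0, Finset.image_image]
        have hcomp : ((· + T c0) ∘ (· + (- T c0))) = (id : LatZ d → LatZ d) :=
          funext fun v => by simp
        rw [hcomp, Finset.image_id]
      have hP0Lam : ↑P0 ⊆ Lam k := by
        intro v hv
        obtain ⟨u, hu, huv⟩ := Finset.mem_image.1 hv
        rw [← huv]
        exact hPsub k c0 u hu
      calc cs k ≤ condEnt μ (parts k) P0 := KO k P0 hP0Lam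
        _ = condEnt μ ((parts k).image (· + T c0)) (P0.image (· + T c0)) :=
            (condEnt_shift μ hinv (T c0) _ _).symm
        _ = condEnt μ (Blk (key k c0)) P := by rw [hfull k hg, ← hPP0]
    -- upper bound on good terms
    have hterm_up : ∀ (k : Fin N) (c0 : Fin d → ℤ), c0 ∈ good n r →
        condEnt μ (Blk (key k c0)) ((Q.filter (· < key k c0)).biUnion Blk) ≤ seqf k r := by
      intro k c0 hg
      set P := (Q.filter (· < key k c0)).biUnion Blk with hP
      have hD : (interBox d (Lam k) r).image (· + T c0) ⊆ P := by
        intro v hv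
        obtain ⟨x, hx, hxv⟩ := Finset.mem_image.1 hv
        have hxV : x ∈ Vbox d r := (mem_interBox.1 hx).1
        have hxL : x ∈ Lam k := (mem_interBox.1 hx).2
        have hxW : x ∈ W r := by
          rw [hW]
          exact Finset.mem_union_right _
            (Finset.mem_biUnion.2 ⟨k, Finset.mem_univ k, hx⟩)
        have hvV : v ∈ Vbox d n := by rw [← hxv]; exact (hgood_mem hg).2 x hxW
        rcases hxL with hxl | hxr
        · -- x = p + g, p ∈ parts k, g ∈ Gneg
          obtain ⟨p, hp, g, hgG, hpg⟩ := Set.mem_add.1 hxl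
          obtain ⟨δ, hδneg, hgδ⟩ := hgG
          have hvp : v = p + T (δ + c0) := by
            rw [← hxv, ← hpg, hgδ, hTadd]
            show p + latt e δ + T c0 = p + (T δ + T c0)
            rw [hTdef]
            abel
          have hlex : lexLt (δ + c0) c0 := by
            have := lexLt_add δ 0 c0 hδneg
            rwa [zero_add] at this
          have hcur : cOf v = δ + c0 :=
            (hcOf_eq v p (δ + c0) (parts_sub k (Finset.mem_coe.1 hp)) hvp).2
          have hQcmem : δ + c0 ∈ Qc n := by
            rw [hQc, ← hcur]
            exact Finset.mem_image_of_mem cOf hvV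
          refine Finset.mem_biUnion.2 ⟨key k (δ + c0), ?_, ?_⟩
          · refine Finset.mem_filter.2 ⟨hQmem' k (δ + c0) hQcmem, ?_⟩
            exact key_lt.2 (Or.inr ⟨rfl, hlex⟩)
          · rw [hBlk_key]
            exact Finset.mem_inter.2
              ⟨Finset.mem_image.2 ⟨p, Finset.mem_coe.1 hp, hvp.symm⟩, hvV⟩
        · -- x = p + g, p ∈ parts j for j < k, g ∈ Gfull
          obtain ⟨p, hp, g, hgG, hpg⟩ := Set.mem_add.1 hxr
          obtain ⟨δ, hgδ⟩ := Set.mem_range.1 hgG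
          obtain ⟨j, hjIio, hpj⟩ := Finset.mem_biUnion.1 (Finset.mem_coe.1 hp)
          have hvp : v = p + T (δ + c0) := by
            rw [← hxv, ← hpg, ← hgδ, hTadd]
            show p + latt e δ + T c0 = p + (T δ + T c0)
            rw [hTdef]
            abel
          have hcur : cOf v = δ + c0 :=
            (hcOf_eq v p (δ + c0) (parts_sub j hpj) hvp).2
          have hQcmem : δ + c0 ∈ Qc n := by
            rw [hQc, ← hcur]
            exact Finset.mem_image_of_mem cOf hvV
          refine Finset.mem_biUnion.2 ⟨key j (δ + c0), ?_, ?_⟩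
          · refine Finset.mem_filter.2 ⟨hQmem' j (δ + c0) hQcmem, ?_⟩
            exact key_lt.2 (Or.inl (Finset.mem_Iio.1 hjIio))
          · show v ∈ ((parts j).image (· + T (δ + c0))) ∩ Vbox d n
            exact Finset.mem_inter.2
              ⟨Finset.mem_image.2 ⟨p, hpj, hvp.symm⟩, hvV⟩
      calc condEnt μ (Blk (key k c0)) P ≤ condEnt μ (Blk (key k c0))
            ((interBox d (Lam k) r).image (· + T c0)) := condEnt_anti μ hD
        _ = condEnt μ ((parts k).image (· + T c0))
            ((interBox d (Lam k) r).image (· + T c0)) := by rw [hfull k hg]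
        _ = condEnt μ (parts k) (interBox d (Lam k) r) := condEnt_shift μ hinv (T c0) _ _
        _ = seqf k r := rfl
    -- generic bounds on all terms
    have hterm_nonneg : ∀ κ, 0 ≤ condEnt μ (Blk κ) ((Q.filter (· < κ)).biUnion Blk) :=
      fun κ => condEnt_nonneg μ _ _
    have hterm_bad : ∀ κ, condEnt μ (Blk κ) ((Q.filter (· < κ)).biUnion Blk)
        ≤ ((Blk κ).card : ℝ) * Real.log (Fintype.card 𝒜) :=
      fun κ => (condEnt_le_entS μ _ _).trans (entS_le_card μ _)
    -- the good index set
    set Qg : Finset (Lex (Fin N × Lex (Fin d → ℤ))) :=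
      (Finset.univ ×ˢ good n r).image (fun p => key p.1 p.2) with hQg
    have hQgQ : Qg ⊆ Q := by
      rw [hQg, hQ]
      apply Finset.image_subset_image
      apply Finset.product_subset_product (Finset.Subset.refl _)
      rw [hgood]
      exact Finset.filter_subset _ _
    have hQgmem : ∀ {κ}, κ ∈ Qg → ∃ k c0, c0 ∈ good n r ∧ κ = key k c0 := by
      intro κ hκ
      rw [hQg] at hκ
      obtain ⟨p, hp, hpκ⟩ := Finset.mem_image.1 hκ
      exact ⟨p.1, p.2, (Finset.mem_product.1 hp).2, hpκ.symm⟩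
    have hkeyinj : ∀ p ∈ Finset.univ ×ˢ good n r, ∀ q ∈ Finset.univ ×ˢ good n r,
        (fun p : Fin N × (Fin d → ℤ) => key p.1 p.2) p
          = (fun p : Fin N × (Fin d → ℤ) => key p.1 p.2) q → p = q := by
      intro p _ q _ h
      obtain ⟨h1, h2⟩ := key_inj h
      exact Prod.ext h1 h2
    have hsum_gen : ∀ f : Fin N → ℝ,
        ∑ κ ∈ Qg, f ((ofLex κ).1) = ((good n r).card : ℝ) * ∑ k, f k := by
      intro f
      rw [hQg, Finset.sum_image hkeyinj, Finset.sum_product]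
      have : ∀ k : Fin N, ∑ c0 ∈ good n r, f ((ofLex ((fun p :
          Fin N × (Fin d → ℤ) => key p.1 p.2) (k, c0))).1)
          = ((good n r).card : ℝ) * f k := by
        intro k
        simp only [hkey, ofLex_toLex]
        rw [Finset.sum_const, nsmul_eq_mul]
      rw [Finset.sum_congr rfl fun k _ => this k, ← Finset.mul_sum]
    have hsum_card_good : ∑ κ ∈ Qg, ((Blk κ).card : ℝ)
        = ((good n r).card : ℝ) * (A.card : ℝ) := by
      rw [hQg, Finset.sum_image hkeyinj, Finset.sum_product]
      have : ∀ k : Fin N, ∀ c0 ∈ good n r,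
          ((Blk (key k c0)).card : ℝ) = ((parts k).card : ℝ) := by
        intro k c0 hg
        rw [hfull k hg, Finset.card_image_of_injective _ (add_left_injective (T c0))]
      calc ∑ k : Fin N, ∑ c0 ∈ good n r, ((Blk ((fun p :
            Fin N × (Fin d → ℤ) => key p.1 p.2) (k, c0))).card : ℝ)
          = ∑ k : Fin N, ∑ _c0 ∈ good n r, ((parts k).card : ℝ) := by
            refine Finset.sum_congr rfl fun k _ => Finset.sum_congr rfl fun c0 hc0 => ?_
            exact this k c0 hc0
        _ = ∑ k : Fin N, ((good n r).card : ℝ) * ((parts k).card : ℝ) := by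
            refine Finset.sum_congr rfl fun k _ => ?_
            rw [Finset.sum_const, nsmul_eq_mul]
        _ = ((good n r).card : ℝ) * (A.card : ℝ) := by
            rw [← Finset.mul_sum]
            congr 1
            rw [← card_parts_sum]
            push_cast
            rfl
    have hsum_card_tot : ∑ κ ∈ Q, ((Blk κ).card : ℝ) = ((Vbox d n).card : ℝ) := by
      have := Finset.card_biUnion hBlk_disj
      rw [hQcover] at this
      rw [this]
      push_cast
      rfl
    have hlogpos : 0 ≤ Real.log (Fintype.card 𝒜) := by
      apply Real.log_nonneg
      have := Fintype.card_pos (α := 𝒜)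
      exact_mod_cast this
    constructor
    · -- lower bound
      rw [hchain]
      have h1 : ∑ κ ∈ Qg, condEnt μ (Blk κ) ((Q.filter (· < κ)).biUnion Blk)
          ≤ ∑ κ ∈ Q, condEnt μ (Blk κ) ((Q.filter (· < κ)).biUnion Blk) :=
        Finset.sum_le_sum_of_subset_of_nonneg hQgQ fun κ _ _ => hterm_nonneg κ
      have h2 : ∑ κ ∈ Qg, cs ((ofLex κ).1)
          ≤ ∑ κ ∈ Qg, condEnt μ (Blk κ) ((Q.filter (· < κ)).biUnion Blk) := by
        refine Finset.sum_le_sum fun κ hκ => ?_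
        obtain ⟨k, c0, hg, rfl⟩ := hQgmem hκ
        exact hterm_low k c0 hg
      rw [hsum_gen cs] at h2
      linarith
    · -- upper bound
      rw [hchain]
      have hsplit := Finset.sum_sdiff (f := fun κ =>
        condEnt μ (Blk κ) ((Q.filter (· < κ)).biUnion Blk)) hQgQ
      have h3 : ∑ κ ∈ Qg, condEnt μ (Blk κ) ((Q.filter (· < κ)).biUnion Blk)
          ≤ ((good n r).card : ℝ) * ∑ k, seqf k r := by
        rw [← hsum_gen (fun k => seqf k r)]
        refine Finset.sum_le_sum fun κ hκ => ?_
        obtain ⟨k, c0, hg, rfl⟩ := hQgmem hκ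
        exact hterm_up k c0 hg
      have h4 : ∑ κ ∈ Q \ Qg, condEnt μ (Blk κ) ((Q.filter (· < κ)).biUnion Blk)
          ≤ (((Vbox d n).card : ℝ) - ((good n r).card : ℝ) * (A.card : ℝ))
              * Real.log (Fintype.card 𝒜) := by
        have h5 : ∑ κ ∈ Q \ Qg, condEnt μ (Blk κ) ((Q.filter (· < κ)).biUnion Blk)
            ≤ ∑ κ ∈ Q \ Qg, ((Blk κ).card : ℝ) * Real.log (Fintype.card 𝒜) :=
          Finset.sum_le_sum fun κ _ => hterm_bad κ
        have h6 := Finset.sum_sdiff (f := fun κ => ((Blk κ).card : ℝ)) hQgQ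
        have h7 : ∑ κ ∈ Q \ Qg, ((Blk κ).card : ℝ)
            = ((Vbox d n).card : ℝ) - ((good n r).card : ℝ) * (A.card : ℝ) := by
          rw [← hsum_card_tot, ← hsum_card_good]
          linarith
        rw [← Finset.sum_mul, h7] at h5
        exact h5
      linarith
  have tilecard : ∀ (S : Finset (Fin d → ℤ)),
      (S.biUnion (fun c0 => A.image (· + T c0))).card = S.card * A.card := by
    intro S
    rw [Finset.card_biUnion (fun c0 _ c1 _ hne => tile_disj c0 c1 hne)]
    rw [Finset.sum_congr rfl (fun c0 _ =>
      Finset.card_image_of_injective A (add_left_injective (T c0)))]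
    rw [Finset.sum_const, smul_eq_mul]
  have cnt1 : ∀ r n, (good n r).card * A.card ≤ (Vbox d n).card := by
    intro r n
    have hsub : (good n r).biUnion (fun c0 => A.image (· + T c0)) ⊆ Vbox d n := by
      intro v hv
      obtain ⟨c0, hc0, hvc⟩ := Finset.mem_biUnion.1 hv
      obtain ⟨a, ha, hav⟩ := Finset.mem_image.1 hvc
      rw [hgood] at hc0
      rw [← hav]
      exact (Finset.mem_filter.1 hc0).2 a (hA_W r ha)
    calc (good n r).card * A.card
        = ((good n r).biUnion (fun c0 => A.image (· + T c0))).card := (tilecard _).symm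
      _ ≤ (Vbox d n).card := Finset.card_le_card hsub
  have cnt2 : ∀ r, ∃ ρ, ∀ n, ρ ≤ n → (Vbox d (n - ρ)).card ≤ (good n r).card * A.card := by
    intro r
    obtain ⟨M₁, hM₁⟩ := exists_Vbox_superset (W r)
    obtain ⟨M₂, hM₂⟩ := exists_Vbox_superset A
    refine ⟨M₁ + M₂, ?_⟩
    intro n hρn
    have hsub : Vbox d (n - (M₁ + M₂)) ⊆ (good n r).biUnion (fun c0 => A.image (· + T c0)) := by
      intro v hv
      have hvn : v ∈ Vbox d n := Vbox_mono (Nat.sub_le _ _) hv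
      have hTc : T (cOf v) = v - aOf v := eq_sub_of_add_eq' (hdec v).symm
      have hcg : cOf v ∈ good n r := by
        rw [hgood]
        refine Finset.mem_filter.2 ⟨Finset.mem_image_of_mem cOf hvn, ?_⟩
        intro w hw
        rw [mem_Vbox]
        intro i
        have hw1 := (mem_Vbox.1 (hM₁ hw)) i
        have hw2 := (mem_Vbox.1 (hM₂ (haOfA v))) i
        have hw3 := (mem_Vbox.1 hv) i
        rw [hTc]
        show -(n : ℤ) ≤ w i + (v - aOf v) i ∧ w i + (v - aOf v) i ≤ n
        have hsubi : (v - aOf v) i = v i - aOf v i := rfl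
        rw [hsubi]
        omega
      exact Finset.mem_biUnion.2
        ⟨cOf v, hcg, Finset.mem_image.2 ⟨aOf v, haOfA v, (hdec v).symm⟩⟩
    calc (Vbox d (n - (M₁ + M₂))).card
        ≤ ((good n r).biUnion (fun c0 => A.image (· + T c0))).card :=
          Finset.card_le_card hsub
      _ = (good n r).card * A.card := tilecard _
  -- limits assembly
  have hVpos : ∀ n : ℕ, (0 : ℝ) < ((Vbox d n).card : ℝ) := by
    intro n
    rw [card_Vbox]
    positivity
  set u : ℕ → ℝ := fun n => entS μ (Vbox d n) / ((Vbox d n).card : ℝ) with hu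
  set sσ : ℝ := (1 / (A.card : ℝ)) * ∑ k, cs k with hsσ
  have hA0 : (A.card : ℝ) ≠ 0 := ne_of_gt hAcard_pos
  have hub : ∀ n, u n ≤ Real.log (Fintype.card 𝒜) := by
    intro n
    rw [hu]
    simp only
    rw [div_le_iff₀ (hVpos n)]
    calc entS μ (Vbox d n) ≤ ((Vbox d n).card : ℝ) * Real.log (Fintype.card 𝒜) :=
          entS_le_card μ _
      _ = Real.log (Fintype.card 𝒜) * ((Vbox d n).card : ℝ) := mul_comm _ _
  have hlb : ∀ n, 0 ≤ u n := fun n => div_nonneg (entS_nonneg μ _) (le_of_lt (hVpos n))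
  have hθle1 : ∀ r n, (((good n r).card : ℝ) * (A.card : ℝ)) / ((Vbox d n).card : ℝ) ≤ 1 := by
    intro r n
    rw [div_le_one (hVpos n)]
    exact_mod_cast cnt1 r n
  have hθtend : ∀ r, Tendsto
      (fun n => (((good n r).card : ℝ) * (A.card : ℝ)) / ((Vbox d n).card : ℝ))
      atTop (nhds 1) := by
    intro r
    obtain ⟨ρ, hρ⟩ := cnt2 r
    have hlow : ∀ᶠ n in atTop, ((Vbox d (n - ρ)).card : ℝ) / ((Vbox d n).card : ℝ)
        ≤ (((good n r).card : ℝ) * (A.card : ℝ)) / ((Vbox d n).card : ℝ) := by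
      filter_upwards [eventually_ge_atTop ρ] with n hn
      exact (div_le_div_iff_of_pos_right (hVpos n)).2 (by exact_mod_cast hρ n hn)
    exact tendsto_of_tendsto_of_tendsto_of_le_of_le' (Vbox_ratio_tendsto d ρ)
      tendsto_const_nhds hlow (Filter.Eventually.of_forall (hθle1 r))
  have hliminf : sσ ≤ liminf u atTop := by
    have h1 : ∀ n, sσ * ((((good n 0).card : ℝ) * (A.card : ℝ)) / ((Vbox d n).card : ℝ))
        ≤ u n := by
      intro n
      rw [hu]
      simp only
      rw [le_div_iff₀ (hVpos n)]
      have hEq : sσ * ((((good n 0).card : ℝ) * (A.card : ℝ)) / ((Vbox d n).card : ℝ))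
          * ((Vbox d n).card : ℝ) = ((good n 0).card : ℝ) * ∑ k, cs k := by
        have hV0 : ((Vbox d n).card : ℝ) ≠ 0 := ne_of_gt (hVpos n)
        rw [hsσ]
        have h1 : ((good n 0).card : ℝ) * (A.card : ℝ) / ((Vbox d n).card : ℝ) * ((Vbox d n).card : ℝ) = ((good n 0).card : ℝ) * (A.card : ℝ) := div_mul_cancel₀ _ hV0
        have h2 : (A.card : ℝ) * (A.card : ℝ)⁻¹ = 1 := mul_inv_cancel₀ hA0
        linear_combination (1 / (A.card : ℝ) * ∑ k, cs k) * h1 + (((good n 0).card : ℝ) * ∑ k, cs k) * h2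
      rw [hEq]
      exact (main 0 n).1
    have h2 : Tendsto (fun n => sσ *
        ((((good n 0).card : ℝ) * (A.card : ℝ)) / ((Vbox d n).card : ℝ)))
        atTop (nhds sσ) := by
      have h3 := (hθtend 0).const_mul sσ
      simpa using h3
    calc sσ = liminf (fun n => sσ *
          ((((good n 0).card : ℝ) * (A.card : ℝ)) / ((Vbox d n).card : ℝ))) atTop :=
          (h2.liminf_eq).symm
      _ ≤ liminf u atTop :=
          liminf_le_liminf (Filter.Eventually.of_forall h1)
            (h2.isBoundedUnder_ge)
            (Filter.isCoboundedUnder_ge_of_eventually_le atTop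
              (Filter.Eventually.of_forall hub))
  have hlimsup : limsup u atTop ≤ sσ := by
    have key : ∀ r, limsup u atTop ≤ (1 / (A.card : ℝ)) * ∑ k, seqf k r := by
      intro r
      set L := Real.log (Fintype.card 𝒜) with hL
      set Br := (1 / (A.card : ℝ)) * ∑ k, seqf k r with hBr
      have hv : ∀ n, u n ≤ ((((good n r).card : ℝ) * (A.card : ℝ)) / ((Vbox d n).card : ℝ)) * Br
          + (1 - (((good n r).card : ℝ) * (A.card : ℝ)) / ((Vbox d n).card : ℝ)) * L := by
        intro n
        rw [hu]
        simp only
        rw [div_le_iff₀ (hVpos n)]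
        have hEq : (((((good n r).card : ℝ) * (A.card : ℝ)) / ((Vbox d n).card : ℝ)) * Br
            + (1 - (((good n r).card : ℝ) * (A.card : ℝ)) / ((Vbox d n).card : ℝ)) * L)
            * ((Vbox d n).card : ℝ)
            = ((good n r).card : ℝ) * (∑ k, seqf k r)
              + (((Vbox d n).card : ℝ) - ((good n r).card : ℝ) * (A.card : ℝ)) * L := by
          have hV0 : ((Vbox d n).card : ℝ) ≠ 0 := ne_of_gt (hVpos n)
          rw [hBr]
          have h1 : ((good n r).card : ℝ) * (A.card : ℝ) / ((Vbox d n).card : ℝ) * ((Vbox d n).card : ℝ) = ((good n r).card : ℝ) * (A.card : ℝ) := div_mul_cancel₀ _ hV0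
          have h2 : (A.card : ℝ) * (A.card : ℝ)⁻¹ = 1 := mul_inv_cancel₀ hA0
          linear_combination (1 / (A.card : ℝ) * ∑ k, seqf k r - L) * h1 + (((good n r).card : ℝ) * ∑ k, seqf k r) * h2
        rw [hEq]
        exact (main r n).2
      have hvt : Tendsto (fun n =>
          ((((good n r).card : ℝ) * (A.card : ℝ)) / ((Vbox d n).card : ℝ)) * Br
          + (1 - (((good n r).card : ℝ) * (A.card : ℝ)) / ((Vbox d n).card : ℝ)) * L)
          atTop (nhds (1 * Br + (1 - 1) * L)) := by
        exact (((hθtend r).mul tendsto_const_nhds)).add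
          (((tendsto_const_nhds (x := (1:ℝ))).sub (hθtend r)).mul tendsto_const_nhds)
      rw [show (1 : ℝ) * Br + (1 - 1) * L = Br by ring] at hvt
      calc limsup u atTop ≤ limsup (fun n =>
            ((((good n r).card : ℝ) * (A.card : ℝ)) / ((Vbox d n).card : ℝ)) * Br
            + (1 - (((good n r).card : ℝ) * (A.card : ℝ)) / ((Vbox d n).card : ℝ)) * L)
            atTop :=
            limsup_le_limsup (Filter.Eventually.of_forall hv)
              (Filter.isCoboundedUnder_le_of_eventually_le atTop
                (Filter.Eventually.of_forall hlb))
              (hvt.isBoundedUnder_le)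
        _ = Br := hvt.limsup_eq
    have hBrt : Tendsto (fun r => (1 / (A.card : ℝ)) * ∑ k, seqf k r) atTop (nhds sσ) := by
      rw [hsσ]
      exact (tendsto_finset_sum _ (fun k _ => hc_tend k)).const_mul _
    exact ge_of_tendsto hBrt (Filter.Eventually.of_forall key)
  refine ⟨sσ, cs, ?_, fun k => hc_tend k, hsσ⟩
  exact tendsto_of_le_liminf_of_limsup_le hliminf hlimsup
    ⟨Real.log (Fintype.card 𝒜), Filter.eventually_map.2 (Filter.Eventually.of_forall hub)⟩
    ⟨0, Filter.eventually_map.2 (Filter.Eventually.of_forall hlb)⟩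
end

section
/- Let 𝒜 be a finite nonempty set, μ a translation invariant probability measure on 𝒜^(ℤ^d), (A, G) a tiling of ℤ^d with A partitioned into nonempty sets A_1, …, A_N, A_{<k} = ∪_{i<k} A_i, and G_n = {Σ g_i ê_i : |g_i| ≤ n}. Then for each k and each n, S( A_k + G_n | A_{<k} + G_n ) ≥ |G_n| · S( A_k | (A_k + G^−) ∪ (A_{<k} + G) ), where the right-hand conditional entropy (with infinite conditioning set Λ') is lim_m S(A_k | Λ' ∩ V_m). -/
open MeasureTheory Real Filter Pointwise

namespace Aux

set_option linter.unusedSectionVars false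

open scoped Classical

variable {d : ℕ} {𝒜 : Type*} [Fintype 𝒜] [Nonempty 𝒜] [MeasurableSpace 𝒜]
  [MeasurableSingletonClass 𝒜]

/-- restriction of a configuration along a subset inclusion -/
def restr {Λ' Λ : Finset (LatZ d)} (h : Λ' ⊆ Λ) (x : Λ → 𝒜) : Λ' → 𝒜 :=
  fun v => x ⟨v.1, h v.2⟩

def cylSet (Λ : Finset (LatZ d)) (x : Λ → 𝒜) : Set (LatZ d → 𝒜) :=
  {ω | ∀ v : Λ, ω v.1 = x v}

lemma cylProb_def (μ : Measure (LatZ d → 𝒜)) (Λ : Finset (LatZ d)) (x : Λ → 𝒜) :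
    cylProb μ Λ x = (μ (cylSet Λ x)).toReal := rfl

lemma measurableSet_cylSet (Λ : Finset (LatZ d)) (x : Λ → 𝒜) :
    MeasurableSet (cylSet Λ x) := by
  have : cylSet Λ x = ⋂ v : Λ, (fun ω : LatZ d → 𝒜 => ω v.1) ⁻¹' {x v} := by
    ext ω; simp [cylSet, Set.mem_iInter]
  rw [this]
  exact MeasurableSet.iInter fun v =>
    (measurable_pi_apply v.1) (measurableSet_singleton (x v))

lemma cylProb_nonneg (μ : Measure (LatZ d → 𝒜)) (Λ : Finset (LatZ d)) (x : Λ → 𝒜) :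
    0 ≤ cylProb μ Λ x := ENNReal.toReal_nonneg

variable (μ : Measure (LatZ d → 𝒜)) [IsProbabilityMeasure μ]

lemma cylProb_le_restr {Λ' Λ : Finset (LatZ d)} (h : Λ' ⊆ Λ) (x : Λ → 𝒜) :
    cylProb μ Λ x ≤ cylProb μ Λ' (restr h x) := by
  rw [cylProb_def, cylProb_def]
  refine ENNReal.toReal_mono (measure_ne_top μ _) (measure_mono ?_)
  intro ω hω v
  exact hω ⟨v.1, h v.2⟩

/-- Lemma B : marginalization. -/
lemma marg {Λ' Λ : Finset (LatZ d)} (h : Λ' ⊆ Λ) (y : Λ' → 𝒜) :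
    ∑ x ∈ Finset.univ.filter (fun x : Λ → 𝒜 => restr h x = y), cylProb μ Λ x
      = cylProb μ Λ' y := by
  have hset : cylSet Λ' y =
      ⋃ x ∈ Finset.univ.filter (fun x : Λ → 𝒜 => restr h x = y), cylSet Λ x := by
    ext ω
    simp only [Set.mem_iUnion, Finset.mem_filter, Finset.mem_univ, true_and]
    constructor
    · intro hω
      refine ⟨fun v => ω v.1, ?_, fun v => rfl⟩
      funext v
      exact hω v
    · rintro ⟨x, hx, hωx⟩ v
      rw [hωx ⟨v.1, h v.2⟩, ← hx]; rfl
  have hdisj : (↑(Finset.univ.filter (fun x : Λ → 𝒜 => restr h x = y)) :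
      Set (Λ → 𝒜)).PairwiseDisjoint (cylSet Λ (𝒜 := 𝒜)) := by
    intro x _ x' _ hne
    refine Set.disjoint_left.2 fun ω hω hω' => hne ?_
    funext v
    rw [← hω v, ← hω' v]
  rw [cylProb_def, hset, measure_biUnion_finset hdisj (fun x _ => measurableSet_cylSet Λ x),
    ENNReal.toReal_sum (fun x _ => measure_ne_top μ _)]
  rfl

lemma sum_cylProb (Λ : Finset (LatZ d)) : ∑ x : Λ → 𝒜, cylProb μ Λ x = 1 := by
  have h : (∅ : Finset (LatZ d)) ⊆ Λ := Finset.empty_subset Λ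
  have y : ((∅ : Finset (LatZ d)) : Finset (LatZ d)) → 𝒜 := fun v =>
    absurd v.2 (Finset.notMem_empty v.1)
  have hm := marg μ h y
  have hfil : Finset.univ.filter (fun x : Λ → 𝒜 => restr h x = y) = Finset.univ := by
    apply Finset.filter_true_of_mem
    intro x _
    funext v
    exact absurd v.2 (Finset.notMem_empty v.1)
  rw [hfil] at hm
  rw [hm, cylProb_def]
  have : cylSet (∅ : Finset (LatZ d)) y = Set.univ := by
    ext ω
    simp only [Set.mem_univ, iff_true]
    intro v
    exact absurd v.2 (Finset.notMem_empty v.1)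
  rw [this, measure_univ, ENNReal.toReal_one]

/-- Lemma A+B : grouping a sum against a restriction. -/
lemma sum_restr {Λ' Λ : Finset (LatZ d)} (h : Λ' ⊆ Λ) (F : (Λ' → 𝒜) → ℝ) :
    ∑ x : Λ → 𝒜, cylProb μ Λ x * F (restr h x)
      = ∑ y : Λ' → 𝒜, cylProb μ Λ' y * F y := by
  rw [← Finset.sum_fiberwise_of_maps_to (g := fun x : Λ → 𝒜 => restr h x)
    (t := Finset.univ) (fun x _ => Finset.mem_univ _)
    (fun x => cylProb μ Λ x * F (restr h x))]
  refine Finset.sum_congr rfl fun y _ => ?_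
  rw [← marg μ h y, Finset.sum_mul]
  refine Finset.sum_congr rfl fun x hx => ?_
  rw [(Finset.mem_filter.1 hx).2]


/-- Lemma C : partial marginalization over an extension. -/
lemma marg_partial (B C : Finset (LatZ d)) (u : B → 𝒜) :
    ∑ x ∈ Finset.univ.filter
        (fun x : ((B ∪ C : Finset (LatZ d))) → 𝒜 => restr Finset.subset_union_left x = u),
      cylProb μ C (restr Finset.subset_union_right x)
      = cylProb μ (B ∩ C) (restr Finset.inter_subset_left u) := by
  have hMC : (B ∩ C : Finset (LatZ d)) ⊆ C := Finset.inter_subset_right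
  rw [← marg μ hMC (restr Finset.inter_subset_left u)]
  refine Finset.sum_nbij' (fun x => restr Finset.subset_union_right x)
    (fun z => fun v => if h : v.1 ∈ B then u ⟨v.1, h⟩ else
      z ⟨v.1, (Finset.mem_union.1 v.2).resolve_left h⟩) ?_ ?_ ?_ ?_ ?_
  · intro x hx
    rw [Finset.mem_filter] at hx ⊢
    refine ⟨Finset.mem_univ _, ?_⟩
    funext v
    have : restr Finset.subset_union_left x = u := hx.2
    rw [← this]
    rfl
  · intro z hz
    rw [Finset.mem_filter] at hz ⊢
    refine ⟨Finset.mem_univ _, ?_⟩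
    funext v
    simp only [restr]
    rw [dif_pos v.2]
  · intro x hx
    rw [Finset.mem_filter] at hx
    funext v
    by_cases h : v.1 ∈ B
    · simp only [restr, dif_pos h]
      have : restr Finset.subset_union_left x = u := hx.2
      rw [← this]
      rfl
    · simp only [restr, dif_neg h]
  · intro z hz
    rw [Finset.mem_filter] at hz
    funext v
    by_cases h : v.1 ∈ C ∧ v.1 ∈ B
    · simp only [restr, dif_pos h.2]
      have := congrFun hz.2 ⟨v.1, Finset.mem_inter.2 ⟨h.2, h.1⟩⟩
      exact this.symm
    · simp only [restr]
      rw [dif_neg (fun hb => h ⟨v.2, hb⟩)]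
  · intro x hx
    rfl

/-- Lemma A+C : grouping with a marginal weight. -/
lemma sum_restr_marg (B C : Finset (LatZ d)) (F : (B → 𝒜) → ℝ) :
    ∑ x : ((B ∪ C : Finset (LatZ d))) → 𝒜,
        cylProb μ C (restr Finset.subset_union_right x) * F (restr Finset.subset_union_left x)
      = ∑ u : B → 𝒜, cylProb μ (B ∩ C) (restr Finset.inter_subset_left u) * F u := by
  rw [← Finset.sum_fiberwise_of_maps_to
    (g := fun x : ((B ∪ C : Finset (LatZ d))) → 𝒜 => restr Finset.subset_union_left x)
    (t := Finset.univ) (fun x _ => Finset.mem_univ _)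
    (fun x => cylProb μ C (restr Finset.subset_union_right x) *
      F (restr Finset.subset_union_left x))]
  refine Finset.sum_congr rfl fun u _ => ?_
  rw [← marg_partial μ B C u, Finset.sum_mul]
  refine Finset.sum_congr rfl fun x hx => ?_
  rw [(Finset.mem_filter.1 hx).2]



lemma gibbs {ι : Type*} [Fintype ι] (p r : ι → ℝ) (hp : ∀ i, 0 ≤ p i) (hr : ∀ i, 0 ≤ r i)
    (hpr : ∀ i, p i ≠ 0 → r i ≠ 0) (h1 : ∑ i, r i ≤ ∑ i, p i) :
    ∑ i, p i * Real.log (r i) ≤ ∑ i, p i * Real.log (p i) := by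
  have key : ∀ i, p i * Real.log (r i) - p i * Real.log (p i) ≤ r i - p i := by
    intro i
    rcases eq_or_lt_of_le (hp i) with h0 | h0
    · rw [← h0]; simp [hr i]
    · have hri : 0 < r i := lt_of_le_of_ne (hr i) (Ne.symm (hpr i (ne_of_gt h0)))
      have hlog : Real.log (r i / p i) ≤ r i / p i - 1 :=
        Real.log_le_sub_one_of_pos (div_pos hri h0)
      rw [Real.log_div (ne_of_gt hri) (ne_of_gt h0)] at hlog
      have := mul_le_mul_of_nonneg_left hlog (le_of_lt h0)
      calc p i * Real.log (r i) - p i * Real.log (p i)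
          = p i * (Real.log (r i) - Real.log (p i)) := by ring
        _ ≤ p i * (r i / p i - 1) := mul_le_mul_of_nonneg_left hlog (le_of_lt h0)
        _ = r i - p i := by field_simp
  have hsum := Finset.sum_le_sum (fun i (_ : i ∈ Finset.univ) => key i)
  rw [Finset.sum_sub_distrib, Finset.sum_sub_distrib] at hsum
  linarith

lemma condEnt_eq (Λ Λ' : Finset (LatZ d)) :
    condEnt μ Λ Λ' = entS μ (Λ ∪ Λ') - entS μ Λ' := by
  have hsub : Λ' ⊆ Λ ∪ Λ' := Finset.subset_union_right
  have hsplit : ∀ x : ((Λ ∪ Λ' : Finset (LatZ d)) → 𝒜),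
      cylProb μ (Λ ∪ Λ') x * Real.log (cylProb μ (Λ ∪ Λ') x /
          cylProb μ Λ' (fun v => x ⟨v.1, Finset.mem_union_right Λ v.2⟩))
        = cylProb μ (Λ ∪ Λ') x * Real.log (cylProb μ (Λ ∪ Λ') x)
          - cylProb μ (Λ ∪ Λ') x * Real.log (cylProb μ Λ' (restr hsub x)) := by
    intro x
    rcases eq_or_lt_of_le (cylProb_nonneg μ (Λ ∪ Λ') x) with h0 | h0
    · rw [← h0]; ring
    · have hq : (0:ℝ) < cylProb μ Λ' (restr hsub x) :=
        lt_of_lt_of_le h0 (cylProb_le_restr μ hsub x)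
      have : (fun v : Λ' => x ⟨v.1, Finset.mem_union_right Λ v.2⟩) = restr hsub x := rfl
      rw [this, Real.log_div (ne_of_gt h0) (ne_of_gt hq)]
      ring
  rw [condEnt, Finset.sum_congr rfl (fun x _ => hsplit x), Finset.sum_sub_distrib]
  have hgroup : ∑ x : ((Λ ∪ Λ' : Finset (LatZ d)) → 𝒜),
      cylProb μ (Λ ∪ Λ') x * Real.log (cylProb μ Λ' (restr hsub x))
      = ∑ y : Λ' → 𝒜, cylProb μ Λ' y * Real.log (cylProb μ Λ' y) :=
    sum_restr μ hsub (fun y => Real.log (cylProb μ Λ' y))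
  rw [hgroup, entS, entS]
  ring

lemma condEnt_nonneg (Λ Λ' : Finset (LatZ d)) : 0 ≤ condEnt μ Λ Λ' := by
  rw [condEnt, neg_nonneg]
  refine Finset.sum_nonpos fun x _ => ?_
  have hsub : Λ' ⊆ Λ ∪ Λ' := Finset.subset_union_right
  rcases eq_or_lt_of_le (cylProb_nonneg μ (Λ ∪ Λ') x) with h0 | h0
  · rw [← h0]; simp
  · have hq : (0:ℝ) < cylProb μ Λ' (restr hsub x) :=
      lt_of_lt_of_le h0 (cylProb_le_restr μ hsub x)
    have hle : cylProb μ (Λ ∪ Λ') x / cylProb μ Λ' (restr hsub x) ≤ 1 :=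
      (div_le_one hq).2 (cylProb_le_restr μ hsub x)
    have : (fun v : Λ' => x ⟨v.1, Finset.mem_union_right Λ v.2⟩) = restr hsub x := rfl
    rw [this]
    exact mul_nonpos_of_nonneg_of_nonpos (le_of_lt h0)
      (Real.log_nonpos (by positivity) hle)

lemma entS_mono {P Q : Finset (LatZ d)} (h : P ⊆ Q) : entS μ P ≤ entS μ Q := by
  have h0 := condEnt_nonneg μ Q P
  rw [condEnt_eq, Finset.union_eq_left.2 h] at h0
  linarith


lemma entS_submod (B C P : Finset (LatZ d)) (hPB : P ⊆ B) (hPC : P ⊆ C) :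
    entS μ (B ∪ C) + entS μ P ≤ entS μ B + entS μ C := by
  have hB : B ⊆ B ∪ C := Finset.subset_union_left
  have hC : C ⊆ B ∪ C := Finset.subset_union_right
  have hP : P ⊆ B ∪ C := hPB.trans hB
  have hMB : B ∩ C ⊆ B := Finset.inter_subset_left
  have hPM : P ⊆ B ∩ C := Finset.subset_inter hPB hPC
  set p : ((B ∪ C : Finset (LatZ d)) → 𝒜) → ℝ := fun x => cylProb μ (B ∪ C) x with hp_def
  set r : ((B ∪ C : Finset (LatZ d)) → 𝒜) → ℝ := fun x =>
    cylProb μ C (restr hC x) * (cylProb μ B (restr hB x) / cylProb μ P (restr hP x)) with hr_def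
  -- ∑ r ≤ 1
  have hrsum : ∑ x, r x ≤ 1 := by
    have e1 : ∑ x, r x
        = ∑ u : B → 𝒜, cylProb μ (B ∩ C) (restr hMB u) *
            (cylProb μ B u / cylProb μ P (restr hPB u)) := by
      have := sum_restr_marg μ B C
        (fun u => cylProb μ B u / cylProb μ P (restr hPB u))
      rw [← this]
      rfl
    have e2 : ∑ u : B → 𝒜, cylProb μ (B ∩ C) (restr hMB u) *
            (cylProb μ B u / cylProb μ P (restr hPB u))
        = ∑ v : (B ∩ C : Finset (LatZ d)) → 𝒜, cylProb μ (B ∩ C) v *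
            (cylProb μ (B ∩ C) v / cylProb μ P (restr hPM v)) := by
      rw [← sum_restr μ hMB
        (fun v => cylProb μ (B ∩ C) v / cylProb μ P (restr hPM v))]
      refine Finset.sum_congr rfl fun u _ => ?_
      have : restr hPM (restr hMB u) = restr hPB u := rfl
      rw [this]
      ring
    rw [e1, e2, ← sum_cylProb μ (B ∩ C)]
    refine Finset.sum_le_sum fun v _ => ?_
    rcases eq_or_lt_of_le (cylProb_nonneg μ (B ∩ C) v) with h0 | h0
    · rw [← h0]; simp
    · have hle : cylProb μ (B ∩ C) v ≤ cylProb μ P (restr hPM v) := cylProb_le_restr μ hPM v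
      have hq : (0:ℝ) < cylProb μ P (restr hPM v) := lt_of_lt_of_le h0 hle
      nlinarith [(div_le_one hq).2 hle, cylProb_nonneg μ (B ∩ C) v]
  have hpsum : ∑ x, p x = 1 := sum_cylProb μ (B ∪ C)
  have hgibbs : ∑ x, p x * Real.log (r x) ≤ ∑ x, p x * Real.log (p x) := by
    refine gibbs p r (fun x => cylProb_nonneg μ _ x) (fun x => ?_) (fun x hx => ?_) ?_
    · exact mul_nonneg (cylProb_nonneg μ _ _)
        (div_nonneg (cylProb_nonneg μ _ _) (cylProb_nonneg μ _ _))
    · have h0 : (0:ℝ) < p x := lt_of_le_of_ne (cylProb_nonneg μ _ x) (Ne.symm hx)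
      have h1 : (0:ℝ) < cylProb μ C (restr hC x) := lt_of_lt_of_le h0 (cylProb_le_restr μ hC x)
      have h2 : (0:ℝ) < cylProb μ B (restr hB x) := lt_of_lt_of_le h0 (cylProb_le_restr μ hB x)
      have h3 : (0:ℝ) < cylProb μ P (restr hP x) := lt_of_lt_of_le h0 (cylProb_le_restr μ hP x)
      have : (0:ℝ) < r x := mul_pos h1 (div_pos h2 h3)
      exact ne_of_gt this
    · rw [hpsum]; exact hrsum
  -- split the log of r
  have hsplit : ∀ x : ((B ∪ C : Finset (LatZ d)) → 𝒜),
      p x * Real.log (r x) = p x * Real.log (cylProb μ C (restr hC x))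
        + p x * Real.log (cylProb μ B (restr hB x))
        - p x * Real.log (cylProb μ P (restr hP x)) := by
    intro x
    rcases eq_or_lt_of_le (cylProb_nonneg μ (B ∪ C) x) with h0 | h0
    · have : p x = 0 := h0.symm
      rw [this]; ring
    · have h1 : (0:ℝ) < cylProb μ C (restr hC x) := lt_of_lt_of_le h0 (cylProb_le_restr μ hC x)
      have h2 : (0:ℝ) < cylProb μ B (restr hB x) := lt_of_lt_of_le h0 (cylProb_le_restr μ hB x)
      have h3 : (0:ℝ) < cylProb μ P (restr hP x) := lt_of_lt_of_le h0 (cylProb_le_restr μ hP x)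
      rw [hr_def]
      simp only []
      rw [Real.log_mul (ne_of_gt h1) (ne_of_gt (div_pos h2 h3)),
        Real.log_div (ne_of_gt h2) (ne_of_gt h3)]
      ring
  have hsum_split : ∑ x, p x * Real.log (r x)
      = (∑ z : C → 𝒜, cylProb μ C z * Real.log (cylProb μ C z))
        + (∑ u : B → 𝒜, cylProb μ B u * Real.log (cylProb μ B u))
        - (∑ w : P → 𝒜, cylProb μ P w * Real.log (cylProb μ P w)) := by
    rw [Finset.sum_congr rfl (fun x _ => hsplit x), Finset.sum_sub_distrib,
      Finset.sum_add_distrib,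
      sum_restr μ hC (fun z => Real.log (cylProb μ C z)),
      sum_restr μ hB (fun u => Real.log (cylProb μ B u)),
      sum_restr μ hP (fun w => Real.log (cylProb μ P w))]
  have final := hgibbs
  rw [hsum_split] at final
  have hBCent : ∑ x, p x * Real.log (p x) = -entS μ (B ∪ C) := by
    rw [entS]; ring
  rw [hBCent] at final
  rw [entS, entS, entS, entS]
  linarith

lemma condEnt_mono (Λ : Finset (LatZ d)) {P Q : Finset (LatZ d)} (h : P ⊆ Q) :
    condEnt μ Λ Q ≤ condEnt μ Λ P := by
  rw [condEnt_eq, condEnt_eq]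
  have hU : Λ ∪ Q = (Λ ∪ P) ∪ Q := by
    rw [Finset.union_assoc, Finset.union_eq_right.2 h]
  rw [hU]
  have := entS_submod μ (Λ ∪ P) Q P Finset.subset_union_right h
  linarith

lemma condEnt_union (Λ1 Λ2 Λ' : Finset (LatZ d)) :
    condEnt μ (Λ1 ∪ Λ2) Λ' = condEnt μ Λ1 (Λ2 ∪ Λ') + condEnt μ Λ2 Λ' := by
  rw [condEnt_eq, condEnt_eq, condEnt_eq, Finset.union_assoc]
  ring

lemma condEnt_empty (Λ' : Finset (LatZ d)) : condEnt μ ∅ Λ' = 0 := by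
  rw [condEnt_eq, Finset.empty_union]
  ring


lemma measurable_shiftMap (g : LatZ d) : Measurable (shiftMap (𝒜 := 𝒜) (d := d) g) :=
  measurable_pi_lambda _ (fun u => measurable_pi_apply (u + g))

variable {μ} in
lemma cylProb_shift (hinv : TransInv μ) (g : LatZ d) (Λ : Finset (LatZ d))
    (x : (Λ.image (· + g)) → 𝒜) :
    cylProb μ (Λ.image (· + g)) x
      = cylProb μ Λ (fun v => x ⟨v.1 + g, Finset.mem_image_of_mem _ v.2⟩) := by
  set y : Λ → 𝒜 := fun v => x ⟨v.1 + g, Finset.mem_image_of_mem _ v.2⟩ with hy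
  have hev : cylSet (Λ.image (· + g)) x = shiftMap g ⁻¹' cylSet Λ y := by
    ext ω
    constructor
    · intro hω v
      exact hω ⟨v.1 + g, Finset.mem_image_of_mem _ v.2⟩
    · intro hω w
      obtain ⟨v, hv, hvw⟩ := Finset.mem_image.1 w.2
      have h1 : (shiftMap g ω) v = y ⟨v, hv⟩ := hω ⟨v, hv⟩
      have h2 : w = ⟨v + g, Finset.mem_image_of_mem _ hv⟩ := Subtype.ext hvw.symm
      rw [h2]
      exact h1
  rw [cylProb_def, cylProb_def, hev, ← Measure.map_apply (measurable_shiftMap g)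
    (measurableSet_cylSet Λ y), hinv g]

variable {μ} in
lemma entS_shift (hinv : TransInv μ) (g : LatZ d) (Λ : Finset (LatZ d)) :
    entS μ (Λ.image (· + g)) = entS μ Λ := by
  have hTbij : Function.Bijective
      (fun (x : (Λ.image (· + g)) → 𝒜) (v : Λ) => x ⟨v.1 + g, Finset.mem_image_of_mem _ v.2⟩) := by
    constructor
    · intro x x' hxx'
      funext w
      obtain ⟨v, hv, hvw⟩ := Finset.mem_image.1 w.2
      have h2 : w = ⟨v + g, Finset.mem_image_of_mem _ hv⟩ := Subtype.ext hvw.symm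
      rw [h2]
      exact congrFun hxx' ⟨v, hv⟩
    · intro y
      have hmem : ∀ w : (Λ.image (· + g)), w.1 - g ∈ Λ := by
        intro w
        obtain ⟨v, hv, hvw⟩ := Finset.mem_image.1 w.2
        rw [← hvw]
        simpa using hv
      refine ⟨fun w => y ⟨w.1 - g, hmem w⟩, ?_⟩
      funext v
      simp only []
      congr 1
      exact Subtype.ext (by simp)
  rw [entS, entS, neg_inj]
  refine Fintype.sum_bijective _ hTbij _ _ fun x => ?_
  rw [cylProb_shift hinv g Λ x]

variable {μ} in
lemma condEnt_shift (hinv : TransInv μ) (g : LatZ d) (Λ Λ' : Finset (LatZ d)) :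
    condEnt μ (Λ.image (· + g)) (Λ'.image (· + g)) = condEnt μ Λ Λ' := by
  rw [condEnt_eq, condEnt_eq, ← Finset.image_union, entS_shift hinv g,
    entS_shift hinv g]


lemma chain_lower (f : (Fin d → ℤ) → Finset (LatZ d)) (Λ0 : Finset (LatZ d)) (L : ℝ) :
    ∀ cs : List (Fin d → ℤ),
      (∀ c ts, c :: ts <:+ cs →
        L ≤ condEnt μ (f c) (((ts.map f).foldr (· ∪ ·) ∅) ∪ Λ0)) →
      (cs.length : ℝ) * L ≤ condEnt μ ((cs.map f).foldr (· ∪ ·) ∅) Λ0 := by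
  intro cs
  induction cs with
  | nil =>
    intro _
    simp only [List.map_nil, List.foldr_nil, List.length_nil, Nat.cast_zero, zero_mul]
    rw [condEnt_empty]
  | cons c ts ih =>
    intro h
    have h1 : L ≤ condEnt μ (f c) (((ts.map f).foldr (· ∪ ·) ∅) ∪ Λ0) :=
      h c ts (List.suffix_refl _)
    have h2 : (ts.length : ℝ) * L ≤ condEnt μ ((ts.map f).foldr (· ∪ ·) ∅) Λ0 :=
      ih fun c' ts' hsuf => h c' ts' (hsuf.trans (List.suffix_cons c ts))
    have h3 : condEnt μ (((c :: ts).map f).foldr (· ∪ ·) ∅) Λ0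
        = condEnt μ (f c) (((ts.map f).foldr (· ∪ ·) ∅) ∪ Λ0)
          + condEnt μ ((ts.map f).foldr (· ∪ ·) ∅) Λ0 := by
      rw [List.map_cons, List.foldr_cons, condEnt_union]
    rw [h3, List.length_cons]
    push_cast
    linarith

end Aux

noncomputable abbrev lexLin (d : ℕ) : LinearOrder (Lex (LatZ d)) :=
  have h : WellFoundedLT (Fin d) := inferInstance
  @Pi.Lex.linearOrder (Fin d) (fun _ => ℤ) inferInstance h
    (fun _ => inferInstance)

lemma lexLin_lt_iff {d : ℕ} (a b : Lex (LatZ d)) :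
    (lexLin d).lt a b ↔ lexLt (ofLex a) (ofLex b) := by
  constructor
  · rintro ⟨i, hj, hi⟩; exact ⟨i, hi, hj⟩
  · rintro ⟨i, hi, hj⟩; exact ⟨i, hj, hi⟩

noncomputable def descList (d : ℕ) (s : Finset (LatZ d)) : List (LatZ d) :=
  letI := lexLin d
  letI : DecidableEq (Lex (LatZ d)) := fun a b => (inferInstance : DecidableEq (LatZ d)) a b
  (((s.image toLex).sort (· ≤ ·)).reverse).map ofLex

lemma descList_toFinset {d : ℕ} (s : Finset (LatZ d)) : (descList d s).toFinset = s := by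
  classical
  letI := lexLin d
  letI : DecidableEq (Lex (LatZ d)) := fun a b => (inferInstance : DecidableEq (LatZ d)) a b
  ext a
  simp only [descList, List.mem_toFinset, List.mem_map, List.mem_reverse, Finset.mem_sort,
    Finset.mem_image]
  constructor
  · rintro ⟨b, hb, rfl⟩; obtain ⟨c, hc, rfl⟩ := Finset.mem_image.1 hb; exact hc
  · intro ha; exact ⟨toLex a, Finset.mem_image.2 ⟨a, ha, rfl⟩, rfl⟩

lemma descList_length {d : ℕ} (s : Finset (LatZ d)) : (descList d s).length = s.card := by
  letI := lexLin d
  letI : DecidableEq (Lex (LatZ d)) := fun a b => (inferInstance : DecidableEq (LatZ d)) a b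
  rw [descList, List.length_map, List.length_reverse, Finset.length_sort]
  exact Finset.card_image_of_injective _ (toLex.injective)

lemma descList_pairwise {d : ℕ} (s : Finset (LatZ d)) :
    (descList d s).Pairwise (fun c c' => lexLt c' c) := by
  letI := lexLin d
  letI : DecidableEq (Lex (LatZ d)) := fun a b => (inferInstance : DecidableEq (LatZ d)) a b
  have h1 : ((s.image toLex).sort (· ≤ ·)).Pairwise (· < ·) := (Finset.sortedLT_sort _).pairwise
  have h2 : (((s.image toLex).sort (· ≤ ·)).reverse).Pairwise (fun a b => b < a) :=
    List.pairwise_reverse.2 h1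
  rw [descList, List.pairwise_map]
  refine h2.imp ?_
  intro a b hab
  exact (lexLin_lt_iff b a).1 hab


namespace Aux

lemma latt_sub {d : ℕ} (e : Fin d → LatZ d) (c c' : Fin d → ℤ) :
    latt e (c - c') = latt e c - latt e c' := by
  simp [latt, sub_smul, Finset.sum_sub_distrib]

lemma latt_inj {d : ℕ} {e : Fin d → LatZ d} (he : LinearIndependent ℤ e) :
    Function.Injective (latt e) := by
  intro c c' h
  have hz : latt e (c - c') = 0 := by rw [latt_sub, h, sub_self]
  have := Fintype.linearIndependent_iff.1 he (c - c') hz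
  funext i
  have hi := this i
  have : c i - c' i = 0 := hi
  omega

lemma lexLt_sub {d : ℕ} {c c' : Fin d → ℤ} (h : lexLt c c') : lexLt (c - c') 0 := by
  obtain ⟨i, hi, hj⟩ := h
  refine ⟨i, ?_, fun j hji => ?_⟩
  · simp only [Pi.sub_apply, Pi.zero_apply]; omega
  · simp only [Pi.sub_apply, Pi.zero_apply]
    have := hj j hji
    omega

lemma Vbox_mono {d : ℕ} {m m' : ℕ} (h : m ≤ m') : Vbox d m ⊆ Vbox d m' := by
  intro v hv
  rw [Vbox, Fintype.mem_piFinset] at hv ⊢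
  intro i
  have hi := hv i
  rw [Finset.mem_Icc] at hi ⊢
  omega

lemma mem_interBox {d : ℕ} (S : Set (LatZ d)) (m : ℕ) (v : LatZ d) :
    v ∈ interBox d S m ↔ v ∈ Vbox d m ∧ v ∈ S := by
  classical
  rw [show interBox d S m = (Vbox d m).filter (· ∈ S) from by rw [interBox]]
  rw [Finset.mem_filter]

lemma exists_subset_Vbox {d : ℕ} (W : Finset (LatZ d)) : ∃ m, ∀ v ∈ W, v ∈ Vbox d m := by
  set M := W.sup (fun v => Finset.univ.sup fun i => (v i).natAbs) with hM
  refine ⟨M, fun v hv => ?_⟩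
  rw [Vbox, Fintype.mem_piFinset]
  intro i
  rw [Finset.mem_Icc]
  have h1 : (v i).natAbs ≤ M :=
    le_trans (Finset.le_sup (f := fun i => (v i).natAbs) (Finset.mem_univ i))
      (Finset.le_sup (f := fun v => Finset.univ.sup fun i => (v i).natAbs) hv)
  have h2 : |v i| ≤ (M : ℤ) := by
    rw [Int.abs_eq_natAbs]
    exact_mod_cast h1
  exact abs_le.1 h2

end Aux


/-- lower bound. For a translation invariant `μ`, a tiling `(A, G)` and a
partition of `A`, for each `k` and `n`:
`S(A_k + G_n | A_{<k} + G_n) ≥ |G_n| · S(A_k | (A_k + G^-) ∪ (A_{<k} + G))`,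
where the right-hand conditional entropy (infinite conditioning set `Λ'`) is the limit
`lim_m S(A_k | Λ' ∩ V_m)`. -/
theorem block_condEnt_lower_bound {d : ℕ} {𝒜 : Type*} [Fintype 𝒜] [Nonempty 𝒜]
    [MeasurableSpace 𝒜] [MeasurableSingletonClass 𝒜]
    (μ : Measure (LatZ d → 𝒜)) [IsProbabilityMeasure μ] (hinv : TransInv μ)
    (A : Finset (LatZ d)) (e : Fin d → LatZ d) (htile : IsTiling A e)
    (N : ℕ) (parts : Fin N → Finset (LatZ d))
    (hne : ∀ k, (parts k).Nonempty)
    (hdisj : ∀ k l, k ≠ l → Disjoint (parts k) (parts l))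
    (hunion : Finset.univ.biUnion parts = A) (n : ℕ) (k : Fin N) :
    ∃ L : ℝ,
      Filter.Tendsto
        (fun m => condEnt μ (parts k)
          (interBox d
            (((↑(parts k) : Set (LatZ d)) + Gneg e) ∪
              ((↑((Finset.Iio k).biUnion parts) : Set (LatZ d)) + Gfull e)) m))
        Filter.atTop (nhds L) ∧
      ((GboxF e n).card : ℝ) * L ≤
        condEnt μ (parts k + GboxF e n) ((Finset.Iio k).biUnion parts + GboxF e n) := by

  have hinj : Function.Injective (latt e) := Aux.latt_inj htile.indep
  set Ak := parts k with hAk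
  set Blt := (Finset.Iio k).biUnion parts with hBlt
  set Λinf : Set (LatZ d) := (↑Ak + Gneg e) ∪ (↑Blt + Gfull e) with hΛinf
  set f : ℕ → ℝ := fun m => condEnt μ Ak (interBox d Λinf m) with hf
  have hanti : Antitone f := by
    intro m m' hmm'
    refine Aux.condEnt_mono μ Ak ?_
    intro v hv
    rw [Aux.mem_interBox] at hv ⊢
    exact ⟨Aux.Vbox_mono hmm' hv.1, hv.2⟩
  have hbdd : BddBelow (Set.range f) := by
    refine ⟨0, ?_⟩
    rintro x ⟨m, rfl⟩
    exact Aux.condEnt_nonneg μ _ _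
  refine ⟨⨅ m, f m, tendsto_atTop_ciInf hanti hbdd, ?_⟩
  set L := ⨅ m, f m with hLdef
  -- key : conditioning on any finite subset of Λinf is at least L
  have key : ∀ W : Finset (LatZ d), (↑W : Set (LatZ d)) ⊆ Λinf → L ≤ condEnt μ Ak W := by
    intro W hW
    obtain ⟨m, hm⟩ := Aux.exists_subset_Vbox W
    have hsub : W ⊆ interBox d Λinf m := by
      intro v hv
      rw [Aux.mem_interBox]
      exact ⟨hm v hv, hW hv⟩
    exact le_trans (ciInf_le hbdd m) (Aux.condEnt_mono μ Ak hsub)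
  set cs := descList d (Vbox d n) with hcs
  set f' : (Fin d → ℤ) → Finset (LatZ d) := fun c => Ak + ({latt e c} : Finset (LatZ d))
    with hf'
  have hfold : ∀ ls : List (Fin d → ℤ),
      (ls.map f').foldr (· ∪ ·) ∅ = Ak + (ls.map (latt e)).toFinset := by
    intro ls
    induction ls with
    | nil => simp
    | cons c ls ih =>
      rw [List.map_cons, List.foldr_cons, ih, List.map_cons, List.toFinset_cons,
        Finset.insert_eq, Finset.add_union]
  have hterm : ∀ c ts, c :: ts <:+ cs →
      L ≤ condEnt μ (f' c) (((ts.map f').foldr (· ∪ ·) ∅) ∪ (Blt + GboxF e n)) := by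
    intro c ts hsuf
    set g := latt e c with hg
    have hpair : ∀ c' ∈ ts, lexLt c' c := by
      have hp : (c :: ts).Pairwise (fun a b => lexLt b a) :=
        (descList_pairwise (Vbox d n)).sublist hsuf.sublist
      exact (List.pairwise_cons.1 hp).1
    rw [hfold ts]
    set W := (Ak + (ts.map (latt e)).toFinset) ∪ (Blt + GboxF e n) with hW
    have himg1 : Ak.image (· + g) = Ak + ({g} : Finset (LatZ d)) := by
      ext v
      simp only [Finset.mem_image, Finset.mem_add, Finset.mem_singleton]
      constructor
      · rintro ⟨a, ha, rfl⟩; exact ⟨a, ha, g, rfl, rfl⟩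
      · rintro ⟨a, ha, z, rfl, rfl⟩; exact ⟨a, ha, rfl⟩
    have himg2 : (W.image (· + (-g))).image (· + g) = W := by
      rw [Finset.image_image]
      have : ((· + g) ∘ (· + (-g)) : LatZ d → LatZ d) = id := by
        funext v; simp
      rw [this, Finset.image_id]
    have hshift := Aux.condEnt_shift hinv g Ak (W.image (· + (-g)))
    rw [himg1, himg2] at hshift
    have hgoal : f' c = Ak + ({g} : Finset (LatZ d)) := rfl
    rw [hgoal, hshift]
    apply key
    intro v hv
    rw [Finset.coe_image, Set.mem_image] at hv
    obtain ⟨w, hw, rfl⟩ := hv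
    rw [Finset.mem_coe, hW, Finset.mem_union] at hw
    rcases hw with hw1 | hw2
    · obtain ⟨a, ha, t, ht, rfl⟩ := Finset.mem_add.1 hw1
      rw [List.mem_toFinset, List.mem_map] at ht
      obtain ⟨c', hc', rfl⟩ := ht
      rw [hΛinf]
      left
      refine Set.mem_add.2 ⟨a, ha, latt e (c' - c), ⟨c' - c, Aux.lexLt_sub (hpair c' hc'), rfl⟩, ?_⟩
      rw [Aux.latt_sub]
      abel
    · obtain ⟨b, hb, t, ht, rfl⟩ := Finset.mem_add.1 hw2
      rw [GboxF, Finset.mem_image] at ht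
      obtain ⟨c'', _, rfl⟩ := ht
      rw [hΛinf]
      right
      refine Set.mem_add.2 ⟨b, hb, latt e (c'' - c), ⟨c'' - c, rfl⟩, ?_⟩
      rw [Aux.latt_sub]
      abel
  have main := Aux.chain_lower μ f' (Blt + GboxF e n) L cs hterm
  rw [hfold cs] at main
  have hcsfin : (cs.map (latt e)).toFinset = GboxF e n := by
    ext v
    rw [List.mem_toFinset, List.mem_map, GboxF, Finset.mem_image]
    constructor
    · rintro ⟨c, hc, rfl⟩
      exact ⟨c, by rw [← descList_toFinset (Vbox d n), List.mem_toFinset]; exact hc, rfl⟩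
    · rintro ⟨c, hc, rfl⟩
      refine ⟨c, ?_, rfl⟩
      rw [← List.mem_toFinset, descList_toFinset (Vbox d n)]
      exact hc
  rw [hcsfin] at main
  have hlen : (cs.length : ℝ) = ((GboxF e n).card : ℝ) := by
    rw [hcs, descList_length, GboxF, Finset.card_image_of_injective _ hinj]
  rw [hlen] at main
  exact main
end
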